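/- arXiv:1809.05974 — 3 statements merged into one kernel-verified Lean document; each statement's English description precedes it below -/
import Mathlib

section
/- Let G be a (K_8, K_{2,2,2,2,2}, 5)-cockade and let x, y be nonadjacent vertices of G. Then the graph G + xy obtained by adding the edge xy contains K_9 minus two edges as a minor (i.e., contains some graph in the family of complete graphs on 9 vertices with two edges deleted as a minor). -/
open SimpleGraph

/-- The complete 5-partite graph `K_{2,2,2,2,2}`. -/
abbrev K22222 : SimpleGraph (Σ _ : Fin 5, Fin 2) :=
  SimpleGraph.completeMultipartiteGraph fun _ => Fin 2

/-- An `(H₁, H₂, k)`-cockade: any graph isomorphic to `H₁` or `H₂` is one, and identifying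
cliques of size `k` in two cockades yields one (expressed via a decomposition of the glued
graph into the two overlapping pieces). -/
inductive IsCockade {α β : Type} (H₁ : SimpleGraph α) (H₂ : SimpleGraph β) (k : ℕ) :
    {V : Type} → SimpleGraph V → Prop
  | base₁ {V : Type} (G : SimpleGraph V) : Nonempty (G ≃g H₁) → IsCockade H₁ H₂ k G
  | base₂ {V : Type} (G : SimpleGraph V) : Nonempty (G ≃g H₂) → IsCockade H₁ H₂ k G
  | glue {V : Type} (G : SimpleGraph V) (A B : Set V) :
      A ∪ B = Set.univ → ¬ A ⊆ B → ¬ B ⊆ A →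
      (A ∩ B).ncard = k → G.IsClique (A ∩ B) →
      (∀ u ∈ A \ B, ∀ v ∈ B \ A, ¬ G.Adj u v) →
      IsCockade H₁ H₂ k (G.induce A) → IsCockade H₁ H₂ k (G.induce B) →
      IsCockade H₁ H₂ k G

/-- A `(K₈, K_{2,2,2,2,2}, 5)`-cockade. -/
abbrev Cockade85 {V : Type} (G : SimpleGraph V) : Prop :=
  IsCockade (⊤ : SimpleGraph (Fin 8)) K22222 5 G

/-- `H` is a minor of `G`, via branch sets. -/
def IsMinorOf {W V : Type} (H : SimpleGraph W) (G : SimpleGraph V) : Prop :=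
  ∃ B : W → Set V,
    (∀ w, (B w).Nonempty) ∧
    (∀ w, (G.induce (B w)).Connected) ∧
    (Pairwise fun w₁ w₂ => Disjoint (B w₁) (B w₂)) ∧
    (∀ w₁ w₂, H.Adj w₁ w₂ → ∃ u ∈ B w₁, ∃ v ∈ B w₂, G.Adj u v)

/-- `G` contains `K_t` minus two edges as a minor (either of the two nonisomorphic graphs). -/
def HasKEqMinor (t : ℕ) {V : Type} (G : SimpleGraph V) : Prop :=
  ∃ e₁ e₂ : Sym2 (Fin t), e₁ ≠ e₂ ∧ ¬ e₁.IsDiag ∧ ¬ e₂.IsDiag ∧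
    IsMinorOf ((⊤ : SimpleGraph (Fin t)).deleteEdges {e₁, e₂}) G


/-- Add to `G` a new vertex (the `none` vertex) adjacent exactly to the vertices in `N`. -/
def addVertex {V : Type} (G : SimpleGraph V) (N : Set V) : SimpleGraph (Option V) where
  Adj a b :=
    match a, b with
    | some u, some w => G.Adj u w
    | some u, none => u ∈ N
    | none, some w => w ∈ N
    | none, none => False
  symm := ⟨by rintro (_ | u) (_ | w) h <;> first | exact h | exact h.symm⟩
  loopless := ⟨by
    rintro (_ | u) h
    · exact h
    · exact G.loopless.irrefl u h⟩

/-- The graph obtained from `G` by contracting the edge `xy` (the merged vertex is `x`,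
and `y` is deleted). -/
def contractEdge {V : Type} (G : SimpleGraph V) (x y : V) :
    SimpleGraph {z : V // z ≠ y} where
  Adj a b := a ≠ b ∧
    (G.Adj a b ∨ ((a : V) = x ∧ G.Adj y b) ∨ ((b : V) = x ∧ G.Adj y a))
  symm := ⟨by
    rintro a b ⟨hne, h⟩
    refine ⟨hne.symm, ?_⟩
    rcases h with h | ⟨h1, h2⟩ | ⟨h1, h2⟩
    · exact Or.inl h.symm
    · exact Or.inr (Or.inr ⟨h1, h2⟩)
    · exact Or.inr (Or.inl ⟨h1, h2⟩)⟩
  loopless := ⟨fun a h => h.1 rfl⟩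

/-- The join of two graphs. -/
def joinGraph {α β : Type} (G : SimpleGraph α) (H : SimpleGraph β) : SimpleGraph (α ⊕ β) where
  Adj a b :=
    match a, b with
    | .inl a, .inl b => G.Adj a b
    | .inr a, .inr b => H.Adj a b
    | .inl _, .inr _ => True
    | .inr _, .inl _ => True
  symm := ⟨by rintro (a | a) (b | b) h <;> first | exact h.symm | trivial⟩
  loopless := ⟨by rintro (a | a) h; exacts [G.loopless.irrefl a h, H.loopless.irrefl a h]⟩

/-- The disjoint union of two graphs. -/
def disjUnionGraph {α β : Type} (G : SimpleGraph α) (H : SimpleGraph β) :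
    SimpleGraph (α ⊕ β) where
  Adj a b :=
    match a, b with
    | .inl a, .inl b => G.Adj a b
    | .inr a, .inr b => H.Adj a b
    | .inl _, .inr _ => False
    | .inr _, .inl _ => False
  symm := ⟨by rintro (a | a) (b | b) h <;> first | exact h.symm | exact h⟩
  loopless := ⟨by rintro (a | a) h; exacts [G.loopless.irrefl a h, H.loopless.irrefl a h]⟩

/-- The cycle graph `C_n` on `ZMod n`. -/
def cycleG (n : ℕ) [NeZero n] : SimpleGraph (ZMod n) :=
  SimpleGraph.fromRel fun i j => i - j = 1

/-- The Petersen graph, as the Kneser graph on 2-element subsets of a 5-element set. -/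
def petersen : SimpleGraph {s : Finset (Fin 5) // s.card = 2} where
  Adj a b := Disjoint a.1 b.1
  symm := ⟨fun _ _ h => h.symm⟩
  loopless := ⟨by
    intro a h
    have h2 := a.2
    rw [disjoint_self.mp h] at h2
    simp at h2⟩

/-- `G` is `k`-connected: more than `k` vertices, and removing fewer than `k` vertices
leaves a connected graph. -/
def IsKConnected {V : Type} [Fintype V] (k : ℕ) (G : SimpleGraph V) : Prop :=
  k < Fintype.card V ∧ ∀ S : Set V, S.ncard < k → (G.induce Sᶜ).Connected

/-- `G - v` has a `K₄` minor rooted at the 4-element set `T` (with `v ∉ T`): four disjoint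
branch sets avoiding `v`, each inducing a connected subgraph, each meeting `T` in exactly
one vertex, and pairwise joined by an edge. -/
def HasRootedK4MinorAvoiding {V : Type} (G : SimpleGraph V) (T : Set V) (v : V) : Prop :=
  ∃ (t : Fin 4 → V) (B : Fin 4 → Set V),
    Function.Injective t ∧ Set.range t = T ∧
    (∀ i, v ∉ B i) ∧ (∀ i, B i ∩ T = {t i}) ∧
    (∀ i, (G.induce (B i)).Connected) ∧
    (Pairwise fun i j => Disjoint (B i) (B j)) ∧
    (Pairwise fun i j => ∃ a ∈ B i, ∃ b ∈ B j, G.Adj a b)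


open Set

section Aux
variable {V W : Type}

/-- `S` induces a connected subgraph of `G`. -/
def ConnSet (G : SimpleGraph V) (S : Set V) : Prop := (G.induce S).Connected

/-- There is an edge of `G` between `S` and `T`. -/
def SetAdj (G : SimpleGraph V) (S T : Set V) : Prop := ∃ a ∈ S, ∃ b ∈ T, G.Adj a b

lemma SetAdj.monoG {G G' : SimpleGraph V} {S T : Set V} (h : G ≤ G') (hs : SetAdj G S T) :
    SetAdj G' S T := by obtain ⟨a, ha, b, hb, hab⟩ := hs; exact ⟨a, ha, b, hb, h hab⟩

lemma SetAdj.symm {G : SimpleGraph V} {S T : Set V} (hs : SetAdj G S T) : SetAdj G T S := by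
  obtain ⟨a, ha, b, hb, hab⟩ := hs; exact ⟨b, hb, a, ha, hab.symm⟩

lemma SetAdj.subset_left {G : SimpleGraph V} {S S' T : Set V} (hss : S ⊆ S')
    (hs : SetAdj G S T) : SetAdj G S' T := by
  obtain ⟨a, ha, b, hb, hab⟩ := hs; exact ⟨a, hss ha, b, hb, hab⟩

lemma setAdj_of_mem_adj {G : SimpleGraph V} {S T : Set V} {u v : V}
    (hu : u ∈ S) (hv : v ∈ T) (h : G.Adj u v) : SetAdj G S T := ⟨u, hu, v, hv, h⟩

lemma connSet_singleton (G : SimpleGraph V) (a : V) : ConnSet G {a} := by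
  rw [ConnSet, SimpleGraph.connected_iff]
  refine ⟨?_, ⟨⟨a, rfl⟩⟩⟩
  rintro ⟨u, hu⟩ ⟨v, hv⟩
  simp only [mem_singleton_iff] at hu hv
  subst hu; subst hv; rfl

lemma ConnSet.monoG {G G' : SimpleGraph V} {S : Set V} (h : G ≤ G') (hc : ConnSet G S) :
    ConnSet G' S := SimpleGraph.Connected.mono (fun _ _ hab => h hab) hc

lemma connSet_union {G : SimpleGraph V} {S T : Set V} (hS : ConnSet G S) (hT : ConnSet G T)
    {u v : V} (hu : u ∈ S) (hv : v ∈ T) (huv : G.Adj u v) : ConnSet G (S ∪ T) :=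
  by
  have h1 := SimpleGraph.induce_union_connected (show (G.induce S).Connected from hS).preconnected
    (SimpleGraph.induce_pair_connected_of_adj huv).preconnected ⟨u, hu, by simp⟩
  have h2 := SimpleGraph.induce_union_connected h1.preconnected
    (show (G.induce T).Connected from hT).preconnected ⟨v, Or.inr (by simp), hv⟩
  have he : S ∪ {u, v} ∪ T = S ∪ T := by
    ext w; simp only [Set.mem_union, Set.mem_insert_iff, Set.mem_singleton_iff]; aesop
  rw [he] at h2; exact h2

lemma connSet_pair {G : SimpleGraph V} {a b : V} (h : G.Adj a b) : ConnSet G {a, b} :=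
  SimpleGraph.induce_pair_connected_of_adj h

lemma connSet_lift {G : SimpleGraph V} {A : Set V} {S : Set ↥A}
    (h : ConnSet (G.induce A) S) : ConnSet G (Subtype.val '' S) := by
  have e : (G.induce A).induce S ≃g G.induce (Subtype.val '' S) := by
    refine ⟨Equiv.Set.imageOfInjOn Subtype.val S (Subtype.val_injective.injOn), ?_⟩
    intro a b
    rfl
  exact e.connected_iff.mp h

/-- Witness for: a connected set `L` containing `y`, avoiding the clique `C`,
with an edge to every vertex of `C`. -/
structure LightWit (G : SimpleGraph V) (C : Set V) (y : V) (L : Set V) : Prop where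
  mem : y ∈ L
  disjC : Disjoint L C
  conn : ConnSet G L
  adjC : ∀ c ∈ C, ∃ t ∈ L, G.Adj t c

def LightAt (G : SimpleGraph V) (C : Set V) (y : V) : Prop := ∃ L, LightWit G C y L

structure StrongWit (G : SimpleGraph V) (C : Set V) (x : V) (S1 S2 S3 : Set V) : Prop where
  mem : x ∈ S1
  disjC1 : Disjoint S1 C
  disjC2 : Disjoint S2 C
  disjC3 : Disjoint S3 C
  d12 : Disjoint S1 S2
  d13 : Disjoint S1 S3
  d23 : Disjoint S2 S3
  conn1 : ConnSet G S1
  conn2 : ConnSet G S2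
  conn3 : ConnSet G S3
  a12 : SetAdj G S1 S2
  a13 : SetAdj G S1 S3
  a23 : SetAdj G S2 S3
  adjC1 : ∀ c ∈ C, ∃ t ∈ S1, G.Adj t c
  adjC2 : ∀ c ∈ C, ∃ t ∈ S2, G.Adj t c
  adjC3 : ∀ c ∈ C, ∃ t ∈ S3, G.Adj t c

def StrongAt (G : SimpleGraph V) (C : Set V) (x : V) : Prop :=
  ∃ S1 S2 S3, StrongWit G C x S1 S2 S3

structure HeavyWit (G : SimpleGraph V) (C : Set V) (x : V)
    (g : Fin 5 → V) (D : Fin 5 → Set V) (H P1 P2 P3 : Set V) : Prop where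
  ginj : Function.Injective g
  grange : Set.range g = C
  mem : x ∈ H
  disjHC : Disjoint H C
  disjP1C : Disjoint P1 C
  disjP2C : Disjoint P2 C
  disjP3C : Disjoint P3 C
  disjDC : ∀ i, Disjoint (D i) C
  disjDD : ∀ i j, i ≠ j → Disjoint (D i) (D j)
  disjDH : ∀ i, Disjoint (D i) H
  disjDP1 : ∀ i, Disjoint (D i) P1
  disjDP2 : ∀ i, Disjoint (D i) P2
  disjDP3 : ∀ i, Disjoint (D i) P3
  dHP1 : Disjoint H P1
  dHP2 : Disjoint H P2
  dHP3 : Disjoint H P3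
  dP12 : Disjoint P1 P2
  dP13 : Disjoint P1 P3
  dP23 : Disjoint P2 P3
  connH : ConnSet G H
  connP1 : ConnSet G P1
  connP2 : ConnSet G P2
  connP3 : ConnSet G P3
  connZ : ∀ i, ConnSet G ({g i} ∪ D i)
  aHP1 : SetAdj G H P1
  aHP2 : SetAdj G H P2
  aHP3 : SetAdj G H P3
  aP12 : SetAdj G P1 P2
  aP13 : SetAdj G P1 P3
  aP23 : SetAdj G P2 P3
  aP1Z : ∀ i, SetAdj G P1 ({g i} ∪ D i)
  aP2Z : ∀ i, i ≠ 2 → SetAdj G P2 ({g i} ∪ D i)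
  aP3Z : ∀ i, i ≠ 4 → SetAdj G P3 ({g i} ∪ D i)

def HeavyAt (G : SimpleGraph V) (C : Set V) (x : V) : Prop :=
  ∃ g D H P1 P2 P3, HeavyWit G C x g D H P1 P2 P3

end Aux
section Lifts
variable {V : Type} {G G' : SimpleGraph V} {A C : Set V}

lemma disjoint_val_image {S : Set ↥A} {C : Set V}
    (h : Disjoint S (Subtype.val ⁻¹' C)) : Disjoint (Subtype.val '' S) C := by
  rw [Set.disjoint_left] at h ⊢
  rintro v ⟨u, hu, rfl⟩ hvC
  exact h hu hvC

lemma disjoint_val_image2 {S T : Set ↥A} (h : Disjoint S T) :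
    Disjoint (Subtype.val '' S) (Subtype.val '' T) :=
  (Set.disjoint_image_iff Subtype.val_injective).mpr h

lemma setAdj_lift {S T : Set ↥A} (h : SetAdj (G.induce A) S T) :
    SetAdj G (Subtype.val '' S) (Subtype.val '' T) := by
  obtain ⟨a, ha, b, hb, hab⟩ := h
  exact ⟨a.1, ⟨a, ha, rfl⟩, b.1, ⟨b, hb, rfl⟩, hab⟩

lemma ncard_preimage_val (hCA : C ⊆ A) :
    (Subtype.val ⁻¹' C : Set ↥A).ncard = C.ncard := by
  have h2 : Subtype.val '' (Subtype.val ⁻¹' C : Set ↥A) = C := by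
    rw [Set.image_preimage_eq_inter_range, Subtype.range_coe]
    exact Set.inter_eq_self_of_subset_left hCA
  conv_rhs => rw [← h2]
  rw [Set.ncard_image_of_injective _ Subtype.val_injective]

lemma clique_preimage_val (h : G.IsClique C) :
    (G.induce A).IsClique (Subtype.val ⁻¹' C) := by
  rintro a ha b hb hab
  exact h ha hb (fun e => hab (Subtype.ext e))

lemma lightWit_lift (hCA : C ⊆ A) {y : ↥A} {L : Set ↥A}
    (h : LightWit (G.induce A) (Subtype.val ⁻¹' C) y L) :
    LightWit G C y.1 (Subtype.val '' L) where
  mem := ⟨y, h.mem, rfl⟩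
  disjC := disjoint_val_image h.disjC
  conn := connSet_lift h.conn
  adjC := by
    rintro c hc
    obtain ⟨t, ht, hadj⟩ := h.adjC ⟨c, hCA hc⟩ hc
    exact ⟨t.1, ⟨t, ht, rfl⟩, hadj⟩

lemma LightWit.monoG (hle : G ≤ G') {y : V} {L : Set V} (h : LightWit G C y L) :
    LightWit G' C y L where
  mem := h.mem
  disjC := h.disjC
  conn := h.conn.monoG hle
  adjC := fun c hc => by obtain ⟨t, ht, hadj⟩ := h.adjC c hc; exact ⟨t, ht, hle hadj⟩

lemma strongWit_lift (hCA : C ⊆ A) {x : ↥A} {S1 S2 S3 : Set ↥A}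
    (h : StrongWit (G.induce A) (Subtype.val ⁻¹' C) x S1 S2 S3) :
    StrongWit G C x.1 (Subtype.val '' S1) (Subtype.val '' S2) (Subtype.val '' S3) where
  mem := ⟨x, h.mem, rfl⟩
  disjC1 := disjoint_val_image h.disjC1
  disjC2 := disjoint_val_image h.disjC2
  disjC3 := disjoint_val_image h.disjC3
  d12 := disjoint_val_image2 h.d12
  d13 := disjoint_val_image2 h.d13
  d23 := disjoint_val_image2 h.d23
  conn1 := connSet_lift h.conn1
  conn2 := connSet_lift h.conn2
  conn3 := connSet_lift h.conn3
  a12 := setAdj_lift h.a12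
  a13 := setAdj_lift h.a13
  a23 := setAdj_lift h.a23
  adjC1 := by
    rintro c hc
    obtain ⟨t, ht, hadj⟩ := h.adjC1 ⟨c, hCA hc⟩ hc
    exact ⟨t.1, ⟨t, ht, rfl⟩, hadj⟩
  adjC2 := by
    rintro c hc
    obtain ⟨t, ht, hadj⟩ := h.adjC2 ⟨c, hCA hc⟩ hc
    exact ⟨t.1, ⟨t, ht, rfl⟩, hadj⟩
  adjC3 := by
    rintro c hc
    obtain ⟨t, ht, hadj⟩ := h.adjC3 ⟨c, hCA hc⟩ hc
    exact ⟨t.1, ⟨t, ht, rfl⟩, hadj⟩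

lemma StrongWit.monoG (hle : G ≤ G') {x : V} {S1 S2 S3 : Set V}
    (h : StrongWit G C x S1 S2 S3) : StrongWit G' C x S1 S2 S3 where
  mem := h.mem
  disjC1 := h.disjC1
  disjC2 := h.disjC2
  disjC3 := h.disjC3
  d12 := h.d12
  d13 := h.d13
  d23 := h.d23
  conn1 := h.conn1.monoG hle
  conn2 := h.conn2.monoG hle
  conn3 := h.conn3.monoG hle
  a12 := h.a12.monoG hle
  a13 := h.a13.monoG hle
  a23 := h.a23.monoG hle
  adjC1 := fun c hc => by obtain ⟨t, ht, hadj⟩ := h.adjC1 c hc; exact ⟨t, ht, hle hadj⟩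
  adjC2 := fun c hc => by obtain ⟨t, ht, hadj⟩ := h.adjC2 c hc; exact ⟨t, ht, hle hadj⟩
  adjC3 := fun c hc => by obtain ⟨t, ht, hadj⟩ := h.adjC3 c hc; exact ⟨t, ht, hle hadj⟩

lemma heavyWit_lift (hCA : C ⊆ A) {x : ↥A} {g : Fin 5 → ↥A} {D : Fin 5 → Set ↥A}
    {H P1 P2 P3 : Set ↥A}
    (h : HeavyWit (G.induce A) (Subtype.val ⁻¹' C) x g D H P1 P2 P3) :
    HeavyWit G C x.1 (fun i => (g i).1) (fun i => Subtype.val '' D i)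
      (Subtype.val '' H) (Subtype.val '' P1) (Subtype.val '' P2) (Subtype.val '' P3) where
  ginj := fun i j hij => h.ginj (Subtype.ext hij)
  grange := by
    have : Set.range (fun i => (g i).1) = Subtype.val '' Set.range g := by
      rw [← Set.range_comp]; rfl
    rw [this, h.grange, Set.image_preimage_eq_inter_range, Subtype.range_coe]
    exact Set.inter_eq_self_of_subset_left hCA
  mem := ⟨x, h.mem, rfl⟩
  disjHC := disjoint_val_image h.disjHC
  disjP1C := disjoint_val_image h.disjP1C
  disjP2C := disjoint_val_image h.disjP2C
  disjP3C := disjoint_val_image h.disjP3C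
  disjDC := fun i => disjoint_val_image (h.disjDC i)
  disjDD := fun i j hij => disjoint_val_image2 (h.disjDD i j hij)
  disjDH := fun i => disjoint_val_image2 (h.disjDH i)
  disjDP1 := fun i => disjoint_val_image2 (h.disjDP1 i)
  disjDP2 := fun i => disjoint_val_image2 (h.disjDP2 i)
  disjDP3 := fun i => disjoint_val_image2 (h.disjDP3 i)
  dHP1 := disjoint_val_image2 h.dHP1
  dHP2 := disjoint_val_image2 h.dHP2
  dHP3 := disjoint_val_image2 h.dHP3
  dP12 := disjoint_val_image2 h.dP12
  dP13 := disjoint_val_image2 h.dP13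
  dP23 := disjoint_val_image2 h.dP23
  connH := connSet_lift h.connH
  connP1 := connSet_lift h.connP1
  connP2 := connSet_lift h.connP2
  connP3 := connSet_lift h.connP3
  connZ := fun i => by
    have := connSet_lift (h.connZ i)
    rwa [Set.image_union, Set.image_singleton] at this
  aHP1 := setAdj_lift h.aHP1
  aHP2 := setAdj_lift h.aHP2
  aHP3 := setAdj_lift h.aHP3
  aP12 := setAdj_lift h.aP12
  aP13 := setAdj_lift h.aP13
  aP23 := setAdj_lift h.aP23
  aP1Z := fun i => by
    have := setAdj_lift (h.aP1Z i)
    rwa [Set.image_union, Set.image_singleton] at this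
  aP2Z := fun i hi => by
    have := setAdj_lift (h.aP2Z i hi)
    rwa [Set.image_union, Set.image_singleton] at this
  aP3Z := fun i hi => by
    have := setAdj_lift (h.aP3Z i hi)
    rwa [Set.image_union, Set.image_singleton] at this

lemma HeavyWit.monoG (hle : G ≤ G') {x : V} {g : Fin 5 → V} {D : Fin 5 → Set V}
    {H P1 P2 P3 : Set V} (h : HeavyWit G C x g D H P1 P2 P3) :
    HeavyWit G' C x g D H P1 P2 P3 where
  ginj := h.ginj
  grange := h.grange
  mem := h.mem
  disjHC := h.disjHC
  disjP1C := h.disjP1C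
  disjP2C := h.disjP2C
  disjP3C := h.disjP3C
  disjDC := h.disjDC
  disjDD := h.disjDD
  disjDH := h.disjDH
  disjDP1 := h.disjDP1
  disjDP2 := h.disjDP2
  disjDP3 := h.disjDP3
  dHP1 := h.dHP1
  dHP2 := h.dHP2
  dHP3 := h.dHP3
  dP12 := h.dP12
  dP13 := h.dP13
  dP23 := h.dP23
  connH := h.connH.monoG hle
  connP1 := h.connP1.monoG hle
  connP2 := h.connP2.monoG hle
  connP3 := h.connP3.monoG hle
  connZ := fun i => (h.connZ i).monoG hle
  aHP1 := h.aHP1.monoG hle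
  aHP2 := h.aHP2.monoG hle
  aHP3 := h.aHP3.monoG hle
  aP12 := h.aP12.monoG hle
  aP13 := h.aP13.monoG hle
  aP23 := h.aP23.monoG hle
  aP1Z := fun i => (h.aP1Z i).monoG hle
  aP2Z := fun i hi => (h.aP2Z i hi).monoG hle
  aP3Z := fun i hi => (h.aP3Z i hi).monoG hle

end Lifts
section Bases
variable {V : Type} {G : SimpleGraph V}

lemma fin2_eq_add_one : ∀ {a b : Fin 2}, a ≠ b → a = b + 1 := by decide

lemma fin2_add_one_ne : ∀ a : Fin 2, a + 1 ≠ a := by decide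

lemma lightAt_of_iso_K8 (e : G ≃g (⊤ : SimpleGraph (Fin 8))) {C : Set V} {y : V}
    (hy : y ∉ C) : LightAt G C y := by
  refine ⟨{y}, rfl, Set.disjoint_singleton_left.mpr hy, connSet_singleton _ _, ?_⟩
  intro c hc
  refine ⟨y, rfl, e.map_adj_iff.mp ?_⟩
  simp only [top_adj, ne_eq]
  exact fun h => (by rintro rfl; exact hy hc : y ≠ c) (e.toEquiv.injective h)

lemma strongAt_of_iso_K8 (e : G ≃g (⊤ : SimpleGraph (Fin 8))) {C : Set V} {x : V}
    (hC5 : C.ncard = 5) (hx : x ∉ C) : StrongAt G C x := by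
  haveI : Finite V := Finite.of_equiv _ e.toEquiv.symm
  have hadj : ∀ a b : V, a ≠ b → G.Adj a b := by
    intro a b h
    exact e.map_adj_iff.mp (by simpa using (fun hh => h (e.toEquiv.injective hh)))
  have hcard : Nat.card V = 8 := by rw [Nat.card_congr e.toEquiv]; simp
  have h6 : (insert x C).ncard ≤ 6 := le_trans (Set.ncard_insert_le _ _) (by omega)
  have hcompl : 1 < (insert x C)ᶜ.ncard := by
    have := Set.ncard_add_ncard_compl (insert x C)
    omega
  obtain ⟨a, ha, b, hb, hab⟩ := (Set.one_lt_ncard (Set.toFinite _)).mp hcompl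
  simp only [Set.mem_compl_iff, Set.mem_insert_iff, not_or] at ha hb
  refine ⟨{x}, {a}, {b}, ?_⟩
  have hxa : x ≠ a := fun h => ha.1 h.symm
  have hxb : x ≠ b := fun h => hb.1 h.symm
  exact {
    mem := rfl
    disjC1 := Set.disjoint_singleton_left.mpr hx
    disjC2 := Set.disjoint_singleton_left.mpr ha.2
    disjC3 := Set.disjoint_singleton_left.mpr hb.2
    d12 := by simp [hxa]
    d13 := by simp [hxb]
    d23 := by simp [hab]
    conn1 := connSet_singleton _ _
    conn2 := connSet_singleton _ _
    conn3 := connSet_singleton _ _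
    a12 := ⟨x, rfl, a, rfl, hadj _ _ hxa⟩
    a13 := ⟨x, rfl, b, rfl, hadj _ _ hxb⟩
    a23 := ⟨a, rfl, b, rfl, hadj _ _ hab⟩
    adjC1 := fun c hc => ⟨x, rfl, hadj _ _ (fun h => hx (h ▸ hc))⟩
    adjC2 := fun c hc => ⟨a, rfl, hadj _ _ (fun h => ha.2 (h ▸ hc))⟩
    adjC3 := fun c hc => ⟨b, rfl, hadj _ _ (fun h => hb.2 (h ▸ hc))⟩ }

lemma exists_transversal {C : Set (Σ _ : Fin 5, Fin 2)} (h5 : C.ncard = 5)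
    (hclq : K22222.IsClique C) :
    ∃ f : Fin 5 → Fin 2, C = Set.range (fun i => (⟨i, f i⟩ : Σ _ : Fin 5, Fin 2)) := by
  have key : ∀ a ∈ C, ∀ b ∈ C, a.1 = b.1 → a = b := by
    intro a ha b hb h1
    by_contra hne
    exact (hclq ha hb hne) h1
  have hinj : Set.InjOn Sigma.fst C := fun a ha b hb h => key a ha b hb h
  have himg : (Sigma.fst '' C).ncard = 5 := by rw [Set.ncard_image_of_injOn hinj]; exact h5
  have huniv : Sigma.fst '' C = Set.univ := by
    apply Set.eq_of_subset_of_ncard_le (Set.subset_univ _)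
    rw [Set.ncard_univ, himg]
    simp
  have hsurj : ∀ i : Fin 5, ∃ b : Fin 2, (⟨i, b⟩ : Σ _ : Fin 5, Fin 2) ∈ C := by
    intro i
    have : i ∈ Sigma.fst '' C := by rw [huniv]; trivial
    obtain ⟨a, haC, ha1⟩ := this
    obtain ⟨j, b⟩ := a
    cases ha1
    exact ⟨b, haC⟩
  choose f hf using hsurj
  refine ⟨f, ?_⟩
  ext v
  constructor
  · intro hv
    have : v = ⟨v.1, f v.1⟩ := key v hv _ (hf v.1) rfl
    exact ⟨v.1, this.symm⟩
  · rintro ⟨i, rfl⟩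
    exact hf i

lemma k22222_setup (e : G ≃g K22222) {C : Set V} (hC5 : C.ncard = 5)
    (hclq : G.IsClique C) {z : V} (hz : z ∉ C) :
    ∃ g d : Fin 5 → V,
      Set.range g = C ∧ Function.Injective g ∧ d 0 = z ∧
      (∀ k, d k ∉ C) ∧ (∀ k l, k ≠ l → d k ≠ d l) ∧ (∀ k l, d k ≠ g l) ∧
      (∀ k l, k ≠ l → G.Adj (d k) (d l)) ∧ (∀ k l, k ≠ l → G.Adj (d k) (g l)) ∧
      (∀ k l, k ≠ l → G.Adj (g k) (g l)) := by
  have einj : Function.Injective (⇑e : V → (Σ _ : Fin 5, Fin 2)) :=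
    fun a b h => e.toEquiv.injective h
  have hC5' : (⇑e '' C).ncard = 5 := by
    rw [Set.ncard_image_of_injective _ einj]; exact hC5
  have hclq' : K22222.IsClique (⇑e '' C) := by
    rintro a ⟨a0, ha0, rfl⟩ b ⟨b0, hb0, rfl⟩ hab
    exact e.map_adj_iff.mpr (hclq ha0 hb0 (fun h => hab (by rw [h])))
  obtain ⟨f, hf⟩ := exists_transversal hC5' hclq'
  have hz2 : (e z).2 ≠ f (e z).1 := by
    intro h
    apply hz
    have : e z ∈ ⇑e '' C := by
      rw [hf]
      refine ⟨(e z).1, ?_⟩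
      show (⟨(e z).1, f (e z).1⟩ : Σ _ : Fin 5, Fin 2) = e z
      rw [← h]
    obtain ⟨c, hcC, hc⟩ := this
    rwa [← e.toEquiv.injective hc]
  set σ : Equiv.Perm (Fin 5) := Equiv.swap 0 (e z).1 with hσ
  set g : Fin 5 → V := fun k => e.symm ⟨σ k, f (σ k)⟩ with hg
  set d : Fin 5 → V := fun k => e.symm ⟨σ k, f (σ k) + 1⟩ with hd
  have adjm : ∀ u v : Σ _ : Fin 5, Fin 2, u.1 ≠ v.1 → G.Adj (e.symm u) (e.symm v) :=
    fun u v h => e.symm.map_adj_iff.mpr h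
  have hmem : ∀ v : Σ _ : Fin 5, Fin 2, (e.symm v ∈ C ↔ v ∈ ⇑e '' C) := by
    intro v
    constructor
    · intro h
      exact ⟨e.symm v, h, by simp⟩
    · rintro ⟨c, hcC, hc⟩
      have : c = e.symm v := by rw [← hc]; simp
      rwa [← this]
  have hrange : Set.range g = C := by
    rw [hg]
    have h1 : Set.range (fun k => (⟨σ k, f (σ k)⟩ : Σ _ : Fin 5, Fin 2)) =
        Set.range (fun i => (⟨i, f i⟩ : Σ _ : Fin 5, Fin 2)) :=
      Function.Surjective.range_comp σ.surjective
        (fun i => (⟨i, f i⟩ : Σ _ : Fin 5, Fin 2))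
    have h2 : Set.range (fun k => e.symm ⟨σ k, f (σ k)⟩) =
        ⇑e.symm '' Set.range (fun k => (⟨σ k, f (σ k)⟩ : Σ _ : Fin 5, Fin 2)) := by
      rw [← Set.range_comp]; rfl
    rw [h2, h1, ← hf]
    rw [Set.image_image]
    have : ∀ x : V, e.symm (e x) = x := fun x => e.toEquiv.symm_apply_apply x
    simp [this]
  have hd0 : d 0 = z := by
    have hj0 : σ 0 = (e z).1 := Equiv.swap_apply_left 0 (e z).1
    have h2 : (e z).2 = f (e z).1 + 1 := fin2_eq_add_one hz2
    have h3 : (⟨σ 0, f (σ 0) + 1⟩ : Σ _ : Fin 5, Fin 2) = e z := by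
      rw [hj0, ← h2]
    rw [hd]
    simp only [h3]
    simp
  have hdC : ∀ k, d k ∉ C := by
    intro k hk
    rw [hd] at hk
    have := (hmem _).mp hk
    rw [hf] at this
    obtain ⟨i, hi⟩ := this
    have h1 : i = σ k := congrArg Sigma.fst hi
    subst h1
    have h2 := (Sigma.ext_iff.mp hi).2
    exact fin2_add_one_ne _ (eq_of_heq h2).symm
  have hginj : Function.Injective g := by
    intro a b h
    rw [hg] at h
    have := e.symm.toEquiv.injective h
    have h1 : σ a = σ b := congrArg Sigma.fst this
    exact σ.injective h1
  refine ⟨g, d, hrange, hginj, hd0, hdC, ?_, ?_, ?_, ?_, ?_⟩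
  · intro k l hkl h
    rw [hd] at h
    have := e.symm.toEquiv.injective h
    exact hkl (σ.injective (congrArg Sigma.fst this))
  · intro k l h
    rw [hd, hg] at h
    have h0 := e.symm.toEquiv.injective h
    have hk : k = l := σ.injective (congrArg Sigma.fst h0)
    subst hk
    exact fin2_add_one_ne _ (eq_of_heq (Sigma.ext_iff.mp h0).2)
  · intro k l hkl
    exact adjm _ _ (fun h => hkl (σ.injective h))
  · intro k l hkl
    exact adjm _ _ (fun h => hkl (σ.injective h))
  · intro k l hkl
    exact adjm _ _ (fun h => hkl (σ.injective h))

lemma lightAt_of_iso_K22222 (e : G ≃g K22222) {C : Set V} (hC5 : C.ncard = 5)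
    (hclq : G.IsClique C) {y : V} (hy : y ∉ C) : LightAt G C y := by
  obtain ⟨g, d, hrange, hginj, hd0, hdC, hdd, hdg, hadd, hadg, hagg⟩ :=
    k22222_setup e hC5 hclq hy
  refine ⟨{d 0, d 1}, ?_, ?_, connSet_pair (hadd 0 1 (by decide)), ?_⟩
  · exact Or.inl hd0.symm
  · rw [Set.disjoint_left]
    rintro v (rfl | rfl) hv
    exacts [hdC 0 hv, hdC 1 hv]
  · intro c hc
    rw [← hrange] at hc
    obtain ⟨i, rfl⟩ := hc
    by_cases hi : i = 0
    · subst hi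
      exact ⟨d 1, Or.inr rfl, hadg 1 0 (by decide)⟩
    · exact ⟨d 0, Or.inl rfl, hadg 0 i (fun h => hi h.symm)⟩

lemma heavyAt_of_iso_K22222 (e : G ≃g K22222) {C : Set V} (hC5 : C.ncard = 5)
    (hclq : G.IsClique C) {x : V} (hx : x ∉ C) : HeavyAt G C x := by
  obtain ⟨g, d, hrange, hginj, hd0, hdC, hdd, hdg, hadd, hadg, hagg⟩ :=
    k22222_setup e hC5 hclq hx
  refine ⟨g, (fun i => if i = 1 then {d 3} else ∅), {d 0}, {d 1}, {d 2}, {d 4}, ?_⟩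
  have hdne : ∀ k l : Fin 5, k ≠ l → d k ≠ d l := hdd
  have hdisjC : ∀ k, Disjoint {d k} C := fun k => Set.disjoint_singleton_left.mpr (hdC k)
  exact {
    ginj := hginj
    grange := hrange
    mem := hd0.symm
    disjHC := hdisjC 0
    disjP1C := hdisjC 1
    disjP2C := hdisjC 2
    disjP3C := hdisjC 4
    disjDC := by
      intro i
      by_cases hi : i = 1 <;> simp [hi, hdC 3]
    disjDD := by
      intro i j hij
      by_cases hi : i = 1 <;> by_cases hj : j = 1 <;> simp_all
    disjDH := by
      intro i
      by_cases hi : i = 1 <;> simp [hi, hdne 3 0 (by decide)]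
    disjDP1 := by
      intro i
      by_cases hi : i = 1 <;> simp [hi, hdne 3 1 (by decide)]
    disjDP2 := by
      intro i
      by_cases hi : i = 1 <;> simp [hi, hdne 3 2 (by decide)]
    disjDP3 := by
      intro i
      by_cases hi : i = 1 <;> simp [hi, hdne 3 4 (by decide)]
    dHP1 := by simp [hdne 0 1 (by decide)]
    dHP2 := by simp [hdne 0 2 (by decide)]
    dHP3 := by simp [hdne 0 4 (by decide)]
    dP12 := by simp [hdne 1 2 (by decide)]
    dP13 := by simp [hdne 1 4 (by decide)]
    dP23 := by simp [hdne 2 4 (by decide)]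
    connH := connSet_singleton _ _
    connP1 := connSet_singleton _ _
    connP2 := connSet_singleton _ _
    connP3 := connSet_singleton _ _
    connZ := by
      intro i
      by_cases hi : i = 1
      · subst hi
        have h4 : (if (1 : Fin 5) = 1 then ({d 3} : Set V) else ∅) = {d 3} := if_pos rfl
        rw [h4, Set.singleton_union]
        exact connSet_pair (hadg 3 1 (by decide)).symm
      · simp only [if_neg hi, Set.union_empty]
        exact connSet_singleton _ _
    aHP1 := ⟨d 0, rfl, d 1, rfl, hadd 0 1 (by decide)⟩
    aHP2 := ⟨d 0, rfl, d 2, rfl, hadd 0 2 (by decide)⟩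
    aHP3 := ⟨d 0, rfl, d 4, rfl, hadd 0 4 (by decide)⟩
    aP12 := ⟨d 1, rfl, d 2, rfl, hadd 1 2 (by decide)⟩
    aP13 := ⟨d 1, rfl, d 4, rfl, hadd 1 4 (by decide)⟩
    aP23 := ⟨d 2, rfl, d 4, rfl, hadd 2 4 (by decide)⟩
    aP1Z := by
      intro i
      by_cases hi : i = 1
      · subst hi
        exact ⟨d 1, rfl, d 3, by simp, hadd 1 3 (by decide)⟩
      · exact ⟨d 1, rfl, g i, Or.inl rfl, hadg 1 i (fun h => hi h.symm)⟩
    aP2Z := by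
      intro i hi
      exact ⟨d 2, rfl, g i, Or.inl rfl, hadg 2 i (fun h => hi h.symm)⟩
    aP3Z := by
      intro i hi
      exact ⟨d 4, rfl, g i, Or.inl rfl, hadg 4 i (fun h => hi h.symm)⟩ }

end Bases
section Induction
variable {V : Type} {G : SimpleGraph V}

lemma clique_side {A B : Set V} (hU : A ∪ B = Set.univ)
    (hsep : ∀ u ∈ A \ B, ∀ v ∈ B \ A, ¬ G.Adj u v) {C : Set V} (hclq : G.IsClique C) :
    C ⊆ A ∨ C ⊆ B := by
  by_contra hcon
  push_neg at hcon
  obtain ⟨hA, hB⟩ := hcon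
  obtain ⟨a, haC, haA⟩ := Set.not_subset.mp hA
  obtain ⟨b, hbC, hbB⟩ := Set.not_subset.mp hB
  have haB : a ∈ B := by
    have : a ∈ A ∪ B := hU ▸ Set.mem_univ a
    exact ((Set.mem_union _ _ _).mp this).resolve_left haA
  have hbA : b ∈ A := by
    have : b ∈ A ∪ B := hU ▸ Set.mem_univ b
    exact ((Set.mem_union _ _ _).mp this).resolve_right hbB
  have hab : b ≠ a := fun h => haA (h ▸ hbA)
  exact hsep b ⟨hbA, hbB⟩ a ⟨haB, haA⟩ (hclq hbC haC hab)

lemma finite_of_ncard5 {C : Set V} (h5 : C.ncard = 5) : C.Finite := by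
  have h : Nat.card ↥C = 5 := by rw [Nat.card_coe_set_eq]; exact h5
  have : Finite ↥C := (Nat.card_ne_zero.mp (by omega)).2
  exact Set.toFinite C

lemma cross_disjoint {A B : Set V} {L S : Set V} (hL : L ⊆ B) (hS : S ⊆ A)
    (hLd : Disjoint L (A ∩ B)) : Disjoint L S := by
  rw [Set.disjoint_left]
  intro v hvL hvS
  exact Set.disjoint_left.mp hLd hvL ⟨hS hvS, hL hvL⟩

lemma light_glue_aux {A B : Set V}
    (hU : A ∪ B = Set.univ)
    (h5AB : (A ∩ B).ncard = 5) (hclqAB : G.IsClique (A ∩ B))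
    (ihA : ∀ C : Set ↥A, C.ncard = 5 → (G.induce A).IsClique C →
      ∀ y, y ∉ C → LightAt (G.induce A) C y)
    (ihB : ∀ C : Set ↥B, C.ncard = 5 → (G.induce B).IsClique C →
      ∀ y, y ∉ C → LightAt (G.induce B) C y)
    {C : Set V} (hCA : C ⊆ A) (h5 : C.ncard = 5) (hclq : G.IsClique C)
    {y : V} (hy : y ∉ C) : LightAt G C y := by
  by_cases hyA : y ∈ A
  · obtain ⟨L0, hL0⟩ := ihA (Subtype.val ⁻¹' C) ((ncard_preimage_val hCA).trans h5)
      (clique_preimage_val hclq) ⟨y, hyA⟩ (fun hc => hy hc)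
    exact ⟨_, lightWit_lift hCA hL0⟩
  · have hyB : y ∈ B := by
      have : y ∈ A ∪ B := hU ▸ Set.mem_univ y
      exact ((Set.mem_union _ _ _).mp this).resolve_left hyA
    by_cases hCB : C ⊆ B
    · obtain ⟨L0, hL0⟩ := ihB (Subtype.val ⁻¹' C) ((ncard_preimage_val hCB).trans h5)
        (clique_preimage_val hclq) ⟨y, hyB⟩ (fun hc => hy hc)
      exact ⟨_, lightWit_lift hCB hL0⟩
    · have hns : ¬ (A ∩ B ⊆ C) := by
        intro hsub
        have : A ∩ B = C := Set.eq_of_subset_of_ncard_le hsub (by rw [h5, h5AB]) (finite_of_ncard5 h5)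
        exact hCB (this ▸ Set.inter_subset_right)
      obtain ⟨c', hc'AB, hc'C⟩ := Set.not_subset.mp hns
      obtain ⟨U0, hU0⟩ := ihA (Subtype.val ⁻¹' C) ((ncard_preimage_val hCA).trans h5)
        (clique_preimage_val hclq) ⟨c', hc'AB.1⟩ (fun hc => hc'C hc)
      obtain ⟨L0, hL0⟩ := ihB (Subtype.val ⁻¹' (A ∩ B))
        ((ncard_preimage_val Set.inter_subset_right).trans h5AB)
        (clique_preimage_val hclqAB) ⟨y, hyB⟩ (fun hc => hyA hc.1)
      have Uw := lightWit_lift hCA hU0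
      have Lw := lightWit_lift Set.inter_subset_right hL0
      obtain ⟨t, htL, hadj⟩ := Lw.adjC c' hc'AB
      refine ⟨(Subtype.val '' L0) ∪ (Subtype.val '' U0), ?_, ?_, ?_, ?_⟩
      · exact Or.inl Lw.mem
      · rw [Set.disjoint_union_left]
        exact ⟨cross_disjoint (Subtype.coe_image_subset _ _) hCA Lw.disjC, Uw.disjC⟩
      · exact connSet_union Lw.conn Uw.conn htL Uw.mem hadj
      · intro c hc
        obtain ⟨t', ht', ha'⟩ := Uw.adjC c hc
        exact ⟨t', Or.inr ht', ha'⟩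

theorem cockade_lightAt {G : SimpleGraph V} (h : Cockade85 G) :
    ∀ C : Set V, C.ncard = 5 → G.IsClique C → ∀ y, y ∉ C → LightAt G C y := by
  induction h with
  | base₁ G hne =>
    intro C h5 hclq y hy
    exact lightAt_of_iso_K8 (Classical.choice hne) hy
  | base₂ G hne =>
    intro C h5 hclq y hy
    exact lightAt_of_iso_K22222 (Classical.choice hne) h5 hclq hy
  | glue G A B hU hAB hBA h5AB hclqAB hsep hA hB ihA ihB =>
    intro C h5 hclq y hy
    rcases clique_side hU hsep hclq with hCA | hCB
    · exact light_glue_aux hU h5AB hclqAB ihA ihB hCA h5 hclq hy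
    · refine light_glue_aux (B := A) (by rwa [Set.union_comm]) (by rwa [Set.inter_comm])
        (by rwa [Set.inter_comm]) ihB ihA hCB h5 hclq hy

lemma soh_glue_aux {A B : Set V}
    (hU : A ∪ B = Set.univ)
    (h5AB : (A ∩ B).ncard = 5) (hclqAB : G.IsClique (A ∩ B))
    (hB85 : Cockade85 (G.induce B))
    (ihA : ∀ C : Set ↥A, C.ncard = 5 → (G.induce A).IsClique C →
      ∀ x, x ∉ C → StrongAt (G.induce A) C x ∨ HeavyAt (G.induce A) C x)
    (ihB : ∀ C : Set ↥B, C.ncard = 5 → (G.induce B).IsClique C →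
      ∀ x, x ∉ C → StrongAt (G.induce B) C x ∨ HeavyAt (G.induce B) C x)
    {C : Set V} (hCA : C ⊆ A) (h5 : C.ncard = 5) (hclq : G.IsClique C)
    {x : V} (hx : x ∉ C) : StrongAt G C x ∨ HeavyAt G C x := by
  by_cases hxA : x ∈ A
  · rcases ihA (Subtype.val ⁻¹' C) ((ncard_preimage_val hCA).trans h5)
      (clique_preimage_val hclq) ⟨x, hxA⟩ (fun hc => hx hc) with hS | hH
    · obtain ⟨S1, S2, S3, hw⟩ := hS
      exact Or.inl ⟨_, _, _, strongWit_lift hCA hw⟩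
    · obtain ⟨g, D, H, P1, P2, P3, hw⟩ := hH
      exact Or.inr ⟨_, _, _, _, _, _, heavyWit_lift hCA hw⟩
  · have hxB : x ∈ B := by
      have : x ∈ A ∪ B := hU ▸ Set.mem_univ x
      exact ((Set.mem_union _ _ _).mp this).resolve_left hxA
    by_cases hCB : C ⊆ B
    · rcases ihB (Subtype.val ⁻¹' C) ((ncard_preimage_val hCB).trans h5)
        (clique_preimage_val hclq) ⟨x, hxB⟩ (fun hc => hx hc) with hS | hH
      · obtain ⟨S1, S2, S3, hw⟩ := hS
        exact Or.inl ⟨_, _, _, strongWit_lift hCB hw⟩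
      · obtain ⟨g, D, H, P1, P2, P3, hw⟩ := hH
        exact Or.inr ⟨_, _, _, _, _, _, heavyWit_lift hCB hw⟩
    · have hns : ¬ (A ∩ B ⊆ C) := by
        intro hsub
        have : A ∩ B = C := Set.eq_of_subset_of_ncard_le hsub (by rw [h5, h5AB]) (finite_of_ncard5 h5)
        exact hCB (this ▸ Set.inter_subset_right)
      obtain ⟨c', hc'AB, hc'C⟩ := Set.not_subset.mp hns
      obtain ⟨L0, hL0⟩ := cockade_lightAt hB85 (Subtype.val ⁻¹' (A ∩ B))
        ((ncard_preimage_val Set.inter_subset_right).trans h5AB)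
        (clique_preimage_val hclqAB) ⟨x, hxB⟩ (fun hc => hxA hc.1)
      have Lw := lightWit_lift Set.inter_subset_right hL0
      have hLB : Subtype.val '' L0 ⊆ B := Subtype.coe_image_subset _ _
      have hLdisj : ∀ S : Set V, S ⊆ A → Disjoint (Subtype.val '' L0) S :=
        fun S hS => cross_disjoint hLB hS Lw.disjC
      obtain ⟨t, htL, hadj⟩ := Lw.adjC c' hc'AB
      rcases ihA (Subtype.val ⁻¹' C) ((ncard_preimage_val hCA).trans h5)
        (clique_preimage_val hclq) ⟨c', hc'AB.1⟩ (fun hc => hc'C hc) with hS | hH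
      · obtain ⟨S1, S2, S3, hw0⟩ := hS
        have sw := strongWit_lift hCA hw0
        refine Or.inl ⟨Subtype.val '' L0 ∪ Subtype.val '' S1,
          Subtype.val '' S2, Subtype.val '' S3, ?_⟩
        exact {
          mem := Or.inl Lw.mem
          disjC1 := Set.disjoint_union_left.mpr ⟨hLdisj C hCA, sw.disjC1⟩
          disjC2 := sw.disjC2
          disjC3 := sw.disjC3
          d12 := Set.disjoint_union_left.mpr
            ⟨hLdisj _ (Subtype.coe_image_subset _ _), sw.d12⟩
          d13 := Set.disjoint_union_left.mpr
            ⟨hLdisj _ (Subtype.coe_image_subset _ _), sw.d13⟩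
          d23 := sw.d23
          conn1 := connSet_union Lw.conn sw.conn1 htL sw.mem hadj
          conn2 := sw.conn2
          conn3 := sw.conn3
          a12 := sw.a12.subset_left Set.subset_union_right
          a13 := sw.a13.subset_left Set.subset_union_right
          a23 := sw.a23
          adjC1 := fun c hc => by
            obtain ⟨t', ht', ha'⟩ := sw.adjC1 c hc
            exact ⟨t', Or.inr ht', ha'⟩
          adjC2 := sw.adjC2
          adjC3 := sw.adjC3 }
      · obtain ⟨g, D, H, P1, P2, P3, hw0⟩ := hH
        have hwl := heavyWit_lift hCA hw0
        refine Or.inr ⟨fun i => (g i).1, fun i => Subtype.val '' D i,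
          Subtype.val '' L0 ∪ Subtype.val '' H,
          Subtype.val '' P1, Subtype.val '' P2, Subtype.val '' P3, ?_⟩
        exact {
          ginj := hwl.ginj
          grange := hwl.grange
          mem := Or.inl Lw.mem
          disjHC := Set.disjoint_union_left.mpr ⟨hLdisj C hCA, hwl.disjHC⟩
          disjP1C := hwl.disjP1C
          disjP2C := hwl.disjP2C
          disjP3C := hwl.disjP3C
          disjDC := hwl.disjDC
          disjDD := hwl.disjDD
          disjDH := fun i => Set.disjoint_union_right.mpr
            ⟨(hLdisj _ (Subtype.coe_image_subset _ _)).symm, hwl.disjDH i⟩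
          disjDP1 := hwl.disjDP1
          disjDP2 := hwl.disjDP2
          disjDP3 := hwl.disjDP3
          dHP1 := Set.disjoint_union_left.mpr
            ⟨hLdisj _ (Subtype.coe_image_subset _ _), hwl.dHP1⟩
          dHP2 := Set.disjoint_union_left.mpr
            ⟨hLdisj _ (Subtype.coe_image_subset _ _), hwl.dHP2⟩
          dHP3 := Set.disjoint_union_left.mpr
            ⟨hLdisj _ (Subtype.coe_image_subset _ _), hwl.dHP3⟩
          dP12 := hwl.dP12
          dP13 := hwl.dP13
          dP23 := hwl.dP23
          connH := connSet_union Lw.conn hwl.connH htL hwl.mem hadj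
          connP1 := hwl.connP1
          connP2 := hwl.connP2
          connP3 := hwl.connP3
          connZ := hwl.connZ
          aHP1 := hwl.aHP1.subset_left Set.subset_union_right
          aHP2 := hwl.aHP2.subset_left Set.subset_union_right
          aHP3 := hwl.aHP3.subset_left Set.subset_union_right
          aP12 := hwl.aP12
          aP13 := hwl.aP13
          aP23 := hwl.aP23
          aP1Z := hwl.aP1Z
          aP2Z := hwl.aP2Z
          aP3Z := hwl.aP3Z }

theorem cockade_strongOrHeavy {G : SimpleGraph V} (h : Cockade85 G) :
    ∀ C : Set V, C.ncard = 5 → G.IsClique C → ∀ x, x ∉ C →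
      StrongAt G C x ∨ HeavyAt G C x := by
  induction h with
  | base₁ G hne =>
    intro C h5 hclq x hx
    exact Or.inl (strongAt_of_iso_K8 (Classical.choice hne) h5 hx)
  | base₂ G hne =>
    intro C h5 hclq x hx
    exact Or.inr (heavyAt_of_iso_K22222 (Classical.choice hne) h5 hclq hx)
  | glue G A B hU hAB hBA h5AB hclqAB hsep hA hB ihA ihB =>
    intro C h5 hclq x hx
    rcases clique_side hU hsep hclq with hCA | hCB
    · exact soh_glue_aux hU h5AB hclqAB hB ihA ihB hCA h5 hclq hx
    · exact soh_glue_aux (B := A) (by rwa [Set.union_comm]) (by rwa [Set.inter_comm])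
        (by rwa [Set.inter_comm]) hA ihB ihA hCB h5 hclq hx

end Induction
section MinorMachinery
variable {V W : Type}

lemma isMinorOf_mono {H : SimpleGraph W} {G G' : SimpleGraph V} (hle : G ≤ G')
    (h : IsMinorOf H G) : IsMinorOf H G' := by
  obtain ⟨B, hne, hconn, hdisj, hadj⟩ := h
  refine ⟨B, hne, fun w => ConnSet.monoG hle (hconn w), hdisj, ?_⟩
  intro w1 w2 ha
  obtain ⟨u, hu, v, hv, huv⟩ := hadj w1 w2 ha
  exact ⟨u, hu, v, hv, hle huv⟩

lemma isMinorOf_induce {H : SimpleGraph W} {G : SimpleGraph V} {A : Set V}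
    (h : IsMinorOf H (G.induce A)) : IsMinorOf H G := by
  obtain ⟨B, hne, hconn, hdisj, hadj⟩ := h
  refine ⟨fun w => Subtype.val '' B w, fun w => (hne w).image _,
    fun w => connSet_lift (hconn w), fun w1 w2 hnew => disjoint_val_image2 (hdisj hnew), ?_⟩
  intro w1 w2 ha
  obtain ⟨u, hu, v, hv, huv⟩ := hadj w1 w2 ha
  exact ⟨u.1, ⟨u, hu, rfl⟩, v.1, ⟨v, hv, rfl⟩, huv⟩

lemma hasKEqMinor_mono {G G' : SimpleGraph V} (hle : G ≤ G') (h : HasKEqMinor 9 G) :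
    HasKEqMinor 9 G' := by
  obtain ⟨e1, e2, h12, hd1, hd2, hm⟩ := h
  exact ⟨e1, e2, h12, hd1, hd2, isMinorOf_mono hle hm⟩

lemma hasKEqMinor_induce {G : SimpleGraph V} {A : Set V}
    (h : HasKEqMinor 9 (G.induce A)) : HasKEqMinor 9 G := by
  obtain ⟨e1, e2, h12, hd1, hd2, hm⟩ := h
  exact ⟨e1, e2, h12, hd1, hd2, isMinorOf_induce hm⟩

lemma hasKEqMinor_of {G : SimpleGraph V} (B : Fin 9 → Set V) (e1 e2 : Sym2 (Fin 9))
    (h12 : e1 ≠ e2) (hd1 : ¬ e1.IsDiag) (hd2 : ¬ e2.IsDiag)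
    (hne : ∀ w, (B w).Nonempty) (hconn : ∀ w, ConnSet G (B w))
    (hdisj : ∀ w1 w2, w1 < w2 → Disjoint (B w1) (B w2))
    (hadj : ∀ w1 w2 : Fin 9, w1 < w2 → s(w1, w2) ≠ e1 → s(w1, w2) ≠ e2 →
      SetAdj G (B w1) (B w2)) :
    HasKEqMinor 9 G := by
  refine ⟨e1, e2, h12, hd1, hd2, B, hne, hconn, ?_, ?_⟩
  · intro w1 w2 hnew
    rcases lt_or_gt_of_ne hnew with h | h
    exacts [hdisj _ _ h, (hdisj _ _ h).symm]
  · intro w1 w2 ha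
    rw [SimpleGraph.deleteEdges_adj] at ha
    obtain ⟨hne12, hmem⟩ := ha
    simp only [Set.mem_insert_iff, Set.mem_singleton_iff, not_or] at hmem
    have h1 : w1 ≠ w2 := by
      intro hcon
      exact (SimpleGraph.top_adj _ _).mp hne12 hcon
    rcases lt_or_gt_of_ne h1 with h | h
    · exact hadj _ _ h hmem.1 hmem.2
    · have := hadj _ _ h (by rw [Sym2.eq_swap]; exact hmem.1)
        (by rw [Sym2.eq_swap]; exact hmem.2)
      exact this.symm

end MinorMachinery
section Assemble
variable {V : Type}

lemma setAdj_singleton_right {G : SimpleGraph V} {S : Set V} {c : V}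
    (h : ∃ t ∈ S, G.Adj t c) : SetAdj G S {c} := by
  obtain ⟨t, ht, ha⟩ := h
  exact ⟨t, ht, c, rfl, ha⟩

lemma assemble_strong {G' : SimpleGraph V} {C : Set V} {x y : V} {S1 S2 S3 T : Set V}
    {g : Fin 5 → V} (hginj : Function.Injective g) (hgr : Set.range g = C)
    (hgadj : ∀ i j : Fin 5, i ≠ j → G'.Adj (g i) (g j))
    (hS : StrongWit G' C x S1 S2 S3) (hT : LightWit G' C y T)
    (hdT1 : Disjoint T S1) (hdT2 : Disjoint T S2) (hdT3 : Disjoint T S3)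
    (hST : SetAdj G' S1 T) : HasKEqMinor 9 G' := by
  have hgC : ∀ i, g i ∈ C := fun i => hgr ▸ Set.mem_range_self i
  have hgn1 : ∀ i, g i ∉ S1 := fun i hgi => Set.disjoint_left.mp hS.disjC1 hgi (hgC i)
  have hgn2 : ∀ i, g i ∉ S2 := fun i hgi => Set.disjoint_left.mp hS.disjC2 hgi (hgC i)
  have hgn3 : ∀ i, g i ∉ S3 := fun i hgi => Set.disjoint_left.mp hS.disjC3 hgi (hgC i)
  have hgnT : ∀ i, g i ∉ T := fun i hgi => Set.disjoint_left.mp hT.disjC hgi (hgC i)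
  have hS2ne : S2.Nonempty := by obtain ⟨a, _, b, hb, _⟩ := hS.a12; exact ⟨b, hb⟩
  have hS3ne : S3.Nonempty := by obtain ⟨a, _, b, hb, _⟩ := hS.a13; exact ⟨b, hb⟩
  have dd01 := hS.d12
  have dd02 := hS.d13
  have dd03 := hdT1.symm
  have dd04 := Set.disjoint_singleton_right.mpr (hgn1 0)
  have dd05 := Set.disjoint_singleton_right.mpr (hgn1 1)
  have dd06 := Set.disjoint_singleton_right.mpr (hgn1 2)
  have dd07 := Set.disjoint_singleton_right.mpr (hgn1 3)
  have dd08 := Set.disjoint_singleton_right.mpr (hgn1 4)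
  have dd12 := hS.d23
  have dd13 := hdT2.symm
  have dd14 := Set.disjoint_singleton_right.mpr (hgn2 0)
  have dd15 := Set.disjoint_singleton_right.mpr (hgn2 1)
  have dd16 := Set.disjoint_singleton_right.mpr (hgn2 2)
  have dd17 := Set.disjoint_singleton_right.mpr (hgn2 3)
  have dd18 := Set.disjoint_singleton_right.mpr (hgn2 4)
  have dd23 := hdT3.symm
  have dd24 := Set.disjoint_singleton_right.mpr (hgn3 0)
  have dd25 := Set.disjoint_singleton_right.mpr (hgn3 1)
  have dd26 := Set.disjoint_singleton_right.mpr (hgn3 2)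
  have dd27 := Set.disjoint_singleton_right.mpr (hgn3 3)
  have dd28 := Set.disjoint_singleton_right.mpr (hgn3 4)
  have dd34 := Set.disjoint_singleton_right.mpr (hgnT 0)
  have dd35 := Set.disjoint_singleton_right.mpr (hgnT 1)
  have dd36 := Set.disjoint_singleton_right.mpr (hgnT 2)
  have dd37 := Set.disjoint_singleton_right.mpr (hgnT 3)
  have dd38 := Set.disjoint_singleton_right.mpr (hgnT 4)
  have dd45 := Set.disjoint_singleton.mpr (hginj.ne (show (0:Fin 5) ≠ 1 by decide))
  have dd46 := Set.disjoint_singleton.mpr (hginj.ne (show (0:Fin 5) ≠ 2 by decide))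
  have dd47 := Set.disjoint_singleton.mpr (hginj.ne (show (0:Fin 5) ≠ 3 by decide))
  have dd48 := Set.disjoint_singleton.mpr (hginj.ne (show (0:Fin 5) ≠ 4 by decide))
  have dd56 := Set.disjoint_singleton.mpr (hginj.ne (show (1:Fin 5) ≠ 2 by decide))
  have dd57 := Set.disjoint_singleton.mpr (hginj.ne (show (1:Fin 5) ≠ 3 by decide))
  have dd58 := Set.disjoint_singleton.mpr (hginj.ne (show (1:Fin 5) ≠ 4 by decide))
  have dd67 := Set.disjoint_singleton.mpr (hginj.ne (show (2:Fin 5) ≠ 3 by decide))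
  have dd68 := Set.disjoint_singleton.mpr (hginj.ne (show (2:Fin 5) ≠ 4 by decide))
  have dd78 := Set.disjoint_singleton.mpr (hginj.ne (show (3:Fin 5) ≠ 4 by decide))
  have aa01 := hS.a12
  have aa02 := hS.a13
  have aa03 := hST
  have aa04 := setAdj_singleton_right (hS.adjC1 (g 0) (hgC 0))
  have aa05 := setAdj_singleton_right (hS.adjC1 (g 1) (hgC 1))
  have aa06 := setAdj_singleton_right (hS.adjC1 (g 2) (hgC 2))
  have aa07 := setAdj_singleton_right (hS.adjC1 (g 3) (hgC 3))
  have aa08 := setAdj_singleton_right (hS.adjC1 (g 4) (hgC 4))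
  have aa12 := hS.a23
  have aa14 := setAdj_singleton_right (hS.adjC2 (g 0) (hgC 0))
  have aa15 := setAdj_singleton_right (hS.adjC2 (g 1) (hgC 1))
  have aa16 := setAdj_singleton_right (hS.adjC2 (g 2) (hgC 2))
  have aa17 := setAdj_singleton_right (hS.adjC2 (g 3) (hgC 3))
  have aa18 := setAdj_singleton_right (hS.adjC2 (g 4) (hgC 4))
  have aa24 := setAdj_singleton_right (hS.adjC3 (g 0) (hgC 0))
  have aa25 := setAdj_singleton_right (hS.adjC3 (g 1) (hgC 1))
  have aa26 := setAdj_singleton_right (hS.adjC3 (g 2) (hgC 2))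
  have aa27 := setAdj_singleton_right (hS.adjC3 (g 3) (hgC 3))
  have aa28 := setAdj_singleton_right (hS.adjC3 (g 4) (hgC 4))
  have aa34 := setAdj_singleton_right (hT.adjC (g 0) (hgC 0))
  have aa35 := setAdj_singleton_right (hT.adjC (g 1) (hgC 1))
  have aa36 := setAdj_singleton_right (hT.adjC (g 2) (hgC 2))
  have aa37 := setAdj_singleton_right (hT.adjC (g 3) (hgC 3))
  have aa38 := setAdj_singleton_right (hT.adjC (g 4) (hgC 4))
  have aa45 : SetAdj G' ({g 0} : Set V) {g 1} := ⟨g 0, rfl, g 1, rfl, hgadj 0 1 (by decide)⟩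
  have aa46 : SetAdj G' ({g 0} : Set V) {g 2} := ⟨g 0, rfl, g 2, rfl, hgadj 0 2 (by decide)⟩
  have aa47 : SetAdj G' ({g 0} : Set V) {g 3} := ⟨g 0, rfl, g 3, rfl, hgadj 0 3 (by decide)⟩
  have aa48 : SetAdj G' ({g 0} : Set V) {g 4} := ⟨g 0, rfl, g 4, rfl, hgadj 0 4 (by decide)⟩
  have aa56 : SetAdj G' ({g 1} : Set V) {g 2} := ⟨g 1, rfl, g 2, rfl, hgadj 1 2 (by decide)⟩
  have aa57 : SetAdj G' ({g 1} : Set V) {g 3} := ⟨g 1, rfl, g 3, rfl, hgadj 1 3 (by decide)⟩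
  have aa58 : SetAdj G' ({g 1} : Set V) {g 4} := ⟨g 1, rfl, g 4, rfl, hgadj 1 4 (by decide)⟩
  have aa67 : SetAdj G' ({g 2} : Set V) {g 3} := ⟨g 2, rfl, g 3, rfl, hgadj 2 3 (by decide)⟩
  have aa68 : SetAdj G' ({g 2} : Set V) {g 4} := ⟨g 2, rfl, g 4, rfl, hgadj 2 4 (by decide)⟩
  have aa78 : SetAdj G' ({g 3} : Set V) {g 4} := ⟨g 3, rfl, g 4, rfl, hgadj 3 4 (by decide)⟩
  apply hasKEqMinor_of (![S1, S2, S3, T, {g 0}, {g 1}, {g 2}, {g 3}, {g 4}])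
    s(1, 3) s(2, 3) (by decide) (by decide) (by decide)
  · intro w
    fin_cases w
    exacts [⟨x, hS.mem⟩, hS2ne, hS3ne, ⟨y, hT.mem⟩, ⟨g 0, rfl⟩, ⟨g 1, rfl⟩, ⟨g 2, rfl⟩,
      ⟨g 3, rfl⟩, ⟨g 4, rfl⟩]
  · intro w
    fin_cases w
    exacts [hS.conn1, hS.conn2, hS.conn3, hT.conn, connSet_singleton _ _,
      connSet_singleton _ _, connSet_singleton _ _, connSet_singleton _ _,
      connSet_singleton _ _]
  · intro w1 w2 hlt
    fin_cases w1 <;> fin_cases w2 <;>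
      first | exact absurd hlt (by decide) | assumption
  · intro w1 w2 hlt h1 h2
    fin_cases w1 <;> fin_cases w2 <;>
      first
        | exact absurd hlt (by decide)
        | exact absurd rfl h1
        | exact absurd rfl h2
        | assumption


lemma assemble_heavy {G' : SimpleGraph V} {C : Set V} {x y : V}
    {g : Fin 5 → V} {D : Fin 5 → Set V} {H P1 P2 P3 T : Set V}
    (hw : HeavyWit G' C x g D H P1 P2 P3) (hT : LightWit G' C y T)
    (hdTH : Disjoint T H) (hdTP1 : Disjoint T P1) (hdTP2 : Disjoint T P2)
    (hdTP3 : Disjoint T P3) (hdTD : ∀ i, Disjoint T (D i))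
    (hgadj : ∀ i j : Fin 5, i ≠ j → G'.Adj (g i) (g j))
    (hxy : G'.Adj x y) (hyT : y ∈ T) : HasKEqMinor 9 G' := by
  have hgC : ∀ i, g i ∈ C := fun i => hw.grange ▸ Set.mem_range_self i
  have hgnH : ∀ i, g i ∉ H := fun i hgi => Set.disjoint_left.mp hw.disjHC hgi (hgC i)
  have hgn1 : ∀ i, g i ∉ P1 := fun i hgi => Set.disjoint_left.mp hw.disjP1C hgi (hgC i)
  have hgn2 : ∀ i, g i ∉ P2 := fun i hgi => Set.disjoint_left.mp hw.disjP2C hgi (hgC i)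
  have hgn3 : ∀ i, g i ∉ P3 := fun i hgi => Set.disjoint_left.mp hw.disjP3C hgi (hgC i)
  have hgnT : ∀ i, g i ∉ T := fun i hgi => Set.disjoint_left.mp hT.disjC hgi (hgC i)
  have hgnD : ∀ i j, g i ∉ D j := fun i j hgi =>
    Set.disjoint_left.mp (hw.disjDC j) hgi (hgC i)
  have hP1ne : P1.Nonempty := by obtain ⟨a, _, b, hb, _⟩ := hw.aHP1; exact ⟨b, hb⟩
  have hP2ne : P2.Nonempty := by obtain ⟨a, _, b, hb, _⟩ := hw.aHP2; exact ⟨b, hb⟩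
  have hP3ne : P3.Nonempty := by obtain ⟨a, _, b, hb, _⟩ := hw.aHP3; exact ⟨b, hb⟩
  have dd01 := Set.disjoint_union_left.mpr ⟨hw.dHP1, hdTP1⟩
  have dd02 := Set.disjoint_union_left.mpr ⟨hw.dHP2, hdTP2⟩
  have dd03 := Set.disjoint_union_left.mpr ⟨hw.dHP3, hdTP3⟩
  have dd04 := Set.disjoint_union_left.mpr ⟨Set.disjoint_union_right.mpr ⟨Set.disjoint_singleton_right.mpr (hgnH 0), (hw.disjDH 0).symm⟩, Set.disjoint_union_right.mpr ⟨Set.disjoint_singleton_right.mpr (hgnT 0), hdTD 0⟩⟩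
  have dd05 := Set.disjoint_union_left.mpr ⟨Set.disjoint_union_right.mpr ⟨Set.disjoint_singleton_right.mpr (hgnH 1), (hw.disjDH 1).symm⟩, Set.disjoint_union_right.mpr ⟨Set.disjoint_singleton_right.mpr (hgnT 1), hdTD 1⟩⟩
  have dd06 := Set.disjoint_union_left.mpr ⟨Set.disjoint_union_right.mpr ⟨Set.disjoint_singleton_right.mpr (hgnH 2), (hw.disjDH 2).symm⟩, Set.disjoint_union_right.mpr ⟨Set.disjoint_singleton_right.mpr (hgnT 2), hdTD 2⟩⟩
  have dd07 := Set.disjoint_union_left.mpr ⟨Set.disjoint_union_right.mpr ⟨Set.disjoint_singleton_right.mpr (hgnH 3), (hw.disjDH 3).symm⟩, Set.disjoint_union_right.mpr ⟨Set.disjoint_singleton_right.mpr (hgnT 3), hdTD 3⟩⟩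
  have dd08 := Set.disjoint_union_left.mpr ⟨Set.disjoint_union_right.mpr ⟨Set.disjoint_singleton_right.mpr (hgnH 4), (hw.disjDH 4).symm⟩, Set.disjoint_union_right.mpr ⟨Set.disjoint_singleton_right.mpr (hgnT 4), hdTD 4⟩⟩
  have dd12 := hw.dP12
  have dd13 := hw.dP13
  have dd14 := Set.disjoint_union_right.mpr ⟨Set.disjoint_singleton_right.mpr (hgn1 0), (hw.disjDP1 0).symm⟩
  have dd15 := Set.disjoint_union_right.mpr ⟨Set.disjoint_singleton_right.mpr (hgn1 1), (hw.disjDP1 1).symm⟩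
  have dd16 := Set.disjoint_union_right.mpr ⟨Set.disjoint_singleton_right.mpr (hgn1 2), (hw.disjDP1 2).symm⟩
  have dd17 := Set.disjoint_union_right.mpr ⟨Set.disjoint_singleton_right.mpr (hgn1 3), (hw.disjDP1 3).symm⟩
  have dd18 := Set.disjoint_union_right.mpr ⟨Set.disjoint_singleton_right.mpr (hgn1 4), (hw.disjDP1 4).symm⟩
  have dd23 := hw.dP23
  have dd24 := Set.disjoint_union_right.mpr ⟨Set.disjoint_singleton_right.mpr (hgn2 0), (hw.disjDP2 0).symm⟩
  have dd25 := Set.disjoint_union_right.mpr ⟨Set.disjoint_singleton_right.mpr (hgn2 1), (hw.disjDP2 1).symm⟩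
  have dd26 := Set.disjoint_union_right.mpr ⟨Set.disjoint_singleton_right.mpr (hgn2 2), (hw.disjDP2 2).symm⟩
  have dd27 := Set.disjoint_union_right.mpr ⟨Set.disjoint_singleton_right.mpr (hgn2 3), (hw.disjDP2 3).symm⟩
  have dd28 := Set.disjoint_union_right.mpr ⟨Set.disjoint_singleton_right.mpr (hgn2 4), (hw.disjDP2 4).symm⟩
  have dd34 := Set.disjoint_union_right.mpr ⟨Set.disjoint_singleton_right.mpr (hgn3 0), (hw.disjDP3 0).symm⟩
  have dd35 := Set.disjoint_union_right.mpr ⟨Set.disjoint_singleton_right.mpr (hgn3 1), (hw.disjDP3 1).symm⟩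
  have dd36 := Set.disjoint_union_right.mpr ⟨Set.disjoint_singleton_right.mpr (hgn3 2), (hw.disjDP3 2).symm⟩
  have dd37 := Set.disjoint_union_right.mpr ⟨Set.disjoint_singleton_right.mpr (hgn3 3), (hw.disjDP3 3).symm⟩
  have dd38 := Set.disjoint_union_right.mpr ⟨Set.disjoint_singleton_right.mpr (hgn3 4), (hw.disjDP3 4).symm⟩
  have dd45 := Set.disjoint_union_left.mpr ⟨Set.disjoint_union_right.mpr ⟨Set.disjoint_singleton.mpr (hw.ginj.ne (show (0:Fin 5) ≠ 1 by decide)), Set.disjoint_singleton_left.mpr (hgnD 0 1)⟩, Set.disjoint_union_right.mpr ⟨(Set.disjoint_singleton_left.mpr (hgnD 1 0)).symm, hw.disjDD 0 1 (by decide)⟩⟩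
  have dd46 := Set.disjoint_union_left.mpr ⟨Set.disjoint_union_right.mpr ⟨Set.disjoint_singleton.mpr (hw.ginj.ne (show (0:Fin 5) ≠ 2 by decide)), Set.disjoint_singleton_left.mpr (hgnD 0 2)⟩, Set.disjoint_union_right.mpr ⟨(Set.disjoint_singleton_left.mpr (hgnD 2 0)).symm, hw.disjDD 0 2 (by decide)⟩⟩
  have dd47 := Set.disjoint_union_left.mpr ⟨Set.disjoint_union_right.mpr ⟨Set.disjoint_singleton.mpr (hw.ginj.ne (show (0:Fin 5) ≠ 3 by decide)), Set.disjoint_singleton_left.mpr (hgnD 0 3)⟩, Set.disjoint_union_right.mpr ⟨(Set.disjoint_singleton_left.mpr (hgnD 3 0)).symm, hw.disjDD 0 3 (by decide)⟩⟩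
  have dd48 := Set.disjoint_union_left.mpr ⟨Set.disjoint_union_right.mpr ⟨Set.disjoint_singleton.mpr (hw.ginj.ne (show (0:Fin 5) ≠ 4 by decide)), Set.disjoint_singleton_left.mpr (hgnD 0 4)⟩, Set.disjoint_union_right.mpr ⟨(Set.disjoint_singleton_left.mpr (hgnD 4 0)).symm, hw.disjDD 0 4 (by decide)⟩⟩
  have dd56 := Set.disjoint_union_left.mpr ⟨Set.disjoint_union_right.mpr ⟨Set.disjoint_singleton.mpr (hw.ginj.ne (show (1:Fin 5) ≠ 2 by decide)), Set.disjoint_singleton_left.mpr (hgnD 1 2)⟩, Set.disjoint_union_right.mpr ⟨(Set.disjoint_singleton_left.mpr (hgnD 2 1)).symm, hw.disjDD 1 2 (by decide)⟩⟩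
  have dd57 := Set.disjoint_union_left.mpr ⟨Set.disjoint_union_right.mpr ⟨Set.disjoint_singleton.mpr (hw.ginj.ne (show (1:Fin 5) ≠ 3 by decide)), Set.disjoint_singleton_left.mpr (hgnD 1 3)⟩, Set.disjoint_union_right.mpr ⟨(Set.disjoint_singleton_left.mpr (hgnD 3 1)).symm, hw.disjDD 1 3 (by decide)⟩⟩
  have dd58 := Set.disjoint_union_left.mpr ⟨Set.disjoint_union_right.mpr ⟨Set.disjoint_singleton.mpr (hw.ginj.ne (show (1:Fin 5) ≠ 4 by decide)), Set.disjoint_singleton_left.mpr (hgnD 1 4)⟩, Set.disjoint_union_right.mpr ⟨(Set.disjoint_singleton_left.mpr (hgnD 4 1)).symm, hw.disjDD 1 4 (by decide)⟩⟩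
  have dd67 := Set.disjoint_union_left.mpr ⟨Set.disjoint_union_right.mpr ⟨Set.disjoint_singleton.mpr (hw.ginj.ne (show (2:Fin 5) ≠ 3 by decide)), Set.disjoint_singleton_left.mpr (hgnD 2 3)⟩, Set.disjoint_union_right.mpr ⟨(Set.disjoint_singleton_left.mpr (hgnD 3 2)).symm, hw.disjDD 2 3 (by decide)⟩⟩
  have dd68 := Set.disjoint_union_left.mpr ⟨Set.disjoint_union_right.mpr ⟨Set.disjoint_singleton.mpr (hw.ginj.ne (show (2:Fin 5) ≠ 4 by decide)), Set.disjoint_singleton_left.mpr (hgnD 2 4)⟩, Set.disjoint_union_right.mpr ⟨(Set.disjoint_singleton_left.mpr (hgnD 4 2)).symm, hw.disjDD 2 4 (by decide)⟩⟩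
  have dd78 := Set.disjoint_union_left.mpr ⟨Set.disjoint_union_right.mpr ⟨Set.disjoint_singleton.mpr (hw.ginj.ne (show (3:Fin 5) ≠ 4 by decide)), Set.disjoint_singleton_left.mpr (hgnD 3 4)⟩, Set.disjoint_union_right.mpr ⟨(Set.disjoint_singleton_left.mpr (hgnD 4 3)).symm, hw.disjDD 3 4 (by decide)⟩⟩
  have aa01 : SetAdj G' (H ∪ T) P1 := hw.aHP1.subset_left Set.subset_union_left
  have aa02 : SetAdj G' (H ∪ T) P2 := hw.aHP2.subset_left Set.subset_union_left
  have aa03 : SetAdj G' (H ∪ T) P3 := hw.aHP3.subset_left Set.subset_union_left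
  have aa04 := (by obtain ⟨t, ht, ha⟩ := hT.adjC (g 0) (hgC 0); exact ⟨t, Or.inr ht, g 0, Or.inl rfl, ha⟩ : SetAdj G' (H ∪ T) ({g 0} ∪ D 0))
  have aa05 := (by obtain ⟨t, ht, ha⟩ := hT.adjC (g 1) (hgC 1); exact ⟨t, Or.inr ht, g 1, Or.inl rfl, ha⟩ : SetAdj G' (H ∪ T) ({g 1} ∪ D 1))
  have aa06 := (by obtain ⟨t, ht, ha⟩ := hT.adjC (g 2) (hgC 2); exact ⟨t, Or.inr ht, g 2, Or.inl rfl, ha⟩ : SetAdj G' (H ∪ T) ({g 2} ∪ D 2))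
  have aa07 := (by obtain ⟨t, ht, ha⟩ := hT.adjC (g 3) (hgC 3); exact ⟨t, Or.inr ht, g 3, Or.inl rfl, ha⟩ : SetAdj G' (H ∪ T) ({g 3} ∪ D 3))
  have aa08 := (by obtain ⟨t, ht, ha⟩ := hT.adjC (g 4) (hgC 4); exact ⟨t, Or.inr ht, g 4, Or.inl rfl, ha⟩ : SetAdj G' (H ∪ T) ({g 4} ∪ D 4))
  have aa12 := hw.aP12
  have aa13 := hw.aP13
  have aa14 := hw.aP1Z 0
  have aa15 := hw.aP1Z 1
  have aa16 := hw.aP1Z 2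
  have aa17 := hw.aP1Z 3
  have aa18 := hw.aP1Z 4
  have aa23 := hw.aP23
  have aa24 := hw.aP2Z 0 (by decide)
  have aa25 := hw.aP2Z 1 (by decide)
  have aa27 := hw.aP2Z 3 (by decide)
  have aa28 := hw.aP2Z 4 (by decide)
  have aa34 := hw.aP3Z 0 (by decide)
  have aa35 := hw.aP3Z 1 (by decide)
  have aa36 := hw.aP3Z 2 (by decide)
  have aa37 := hw.aP3Z 3 (by decide)
  have aa45 := (⟨g 0, Or.inl rfl, g 1, Or.inl rfl, hgadj 0 1 (by decide)⟩ : SetAdj G' ({g 0} ∪ D 0) ({g 1} ∪ D 1))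
  have aa46 := (⟨g 0, Or.inl rfl, g 2, Or.inl rfl, hgadj 0 2 (by decide)⟩ : SetAdj G' ({g 0} ∪ D 0) ({g 2} ∪ D 2))
  have aa47 := (⟨g 0, Or.inl rfl, g 3, Or.inl rfl, hgadj 0 3 (by decide)⟩ : SetAdj G' ({g 0} ∪ D 0) ({g 3} ∪ D 3))
  have aa48 := (⟨g 0, Or.inl rfl, g 4, Or.inl rfl, hgadj 0 4 (by decide)⟩ : SetAdj G' ({g 0} ∪ D 0) ({g 4} ∪ D 4))
  have aa56 := (⟨g 1, Or.inl rfl, g 2, Or.inl rfl, hgadj 1 2 (by decide)⟩ : SetAdj G' ({g 1} ∪ D 1) ({g 2} ∪ D 2))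
  have aa57 := (⟨g 1, Or.inl rfl, g 3, Or.inl rfl, hgadj 1 3 (by decide)⟩ : SetAdj G' ({g 1} ∪ D 1) ({g 3} ∪ D 3))
  have aa58 := (⟨g 1, Or.inl rfl, g 4, Or.inl rfl, hgadj 1 4 (by decide)⟩ : SetAdj G' ({g 1} ∪ D 1) ({g 4} ∪ D 4))
  have aa67 := (⟨g 2, Or.inl rfl, g 3, Or.inl rfl, hgadj 2 3 (by decide)⟩ : SetAdj G' ({g 2} ∪ D 2) ({g 3} ∪ D 3))
  have aa68 := (⟨g 2, Or.inl rfl, g 4, Or.inl rfl, hgadj 2 4 (by decide)⟩ : SetAdj G' ({g 2} ∪ D 2) ({g 4} ∪ D 4))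
  have aa78 := (⟨g 3, Or.inl rfl, g 4, Or.inl rfl, hgadj 3 4 (by decide)⟩ : SetAdj G' ({g 3} ∪ D 3) ({g 4} ∪ D 4))
  apply hasKEqMinor_of
    (![H ∪ T, P1, P2, P3, {g 0} ∪ D 0, {g 1} ∪ D 1, {g 2} ∪ D 2, {g 3} ∪ D 3, {g 4} ∪ D 4])
    s(2, 6) s(3, 8) (by decide) (by decide) (by decide)
  · intro w
    fin_cases w
    exacts [⟨x, Or.inl hw.mem⟩, hP1ne, hP2ne, hP3ne, ⟨g 0, Or.inl rfl⟩, ⟨g 1, Or.inl rfl⟩,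
      ⟨g 2, Or.inl rfl⟩, ⟨g 3, Or.inl rfl⟩, ⟨g 4, Or.inl rfl⟩]
  · intro w
    fin_cases w
    exacts [connSet_union hw.connH hT.conn hw.mem hyT hxy, hw.connP1, hw.connP2, hw.connP3,
      hw.connZ 0, hw.connZ 1, hw.connZ 2, hw.connZ 3, hw.connZ 4]
  · intro w1 w2 hlt
    fin_cases w1 <;> fin_cases w2 <;>
      first | exact absurd hlt (by decide) | assumption
  · intro w1 w2 hlt h1 h2
    fin_cases w1 <;> fin_cases w2 <;>
      first
        | exact absurd hlt (by decide)
        | exact absurd rfl h1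
        | exact absurd rfl h2
        | assumption

end Assemble

section Base2
variable {V : Type}

set_option maxHeartbeats 1600000 in
lemma hasKEqMinor_base2 {G : SimpleGraph V} (e : G ≃g K22222) {x y : V}
    (hxy : x ≠ y) (hna : ¬ G.Adj x y) :
    HasKEqMinor 9 (G ⊔ SimpleGraph.fromEdgeSet {s(x, y)}) := by
  set G' := G ⊔ SimpleGraph.fromEdgeSet {s(x, y)} with hG'
  have hle : G ≤ G' := le_sup_left
  have hfst : (e y).1 = (e x).1 := by
    have h1 : ¬ K22222.Adj (e x) (e y) := fun h => hna (e.map_adj_iff.mp h)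
    exact (not_not.mp h1).symm
  set σ : Equiv.Perm (Fin 5) := Equiv.swap 0 (e x).1 with hσ
  set w : Fin 5 → Fin 2 → V := fun k b => e.symm ⟨σ k, b⟩ with hw
  have hx : x = w 0 (e x).2 := by
    rw [hw]
    simp only []
    have h0 : σ 0 = (e x).1 := Equiv.swap_apply_left _ _
    rw [h0]
    have : (⟨(e x).1, (e x).2⟩ : Σ _ : Fin 5, Fin 2) = e x := rfl
    rw [this]
    exact (e.toEquiv.symm_apply_apply x).symm
  have hy : y = w 0 (e y).2 := by
    rw [hw]
    simp only []
    have h0 : σ 0 = (e x).1 := Equiv.swap_apply_left _ _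
    rw [h0, ← hfst]
    have : (⟨(e y).1, (e y).2⟩ : Σ _ : Fin 5, Fin 2) = e y := rfl
    rw [this]
    exact (e.toEquiv.symm_apply_apply y).symm
  have hwinj : ∀ k b k' b', w k b = w k' b' → k = k' ∧ b = b' := by
    intro k b k' b' h
    rw [hw] at h
    have h0 := e.symm.toEquiv.injective h
    have h1 : k = k' := σ.injective (congrArg Sigma.fst h0)
    subst h1
    exact ⟨rfl, eq_of_heq (Sigma.ext_iff.mp h0).2⟩
  have hwne : ∀ {k b k' b'}, ¬ (k = k' ∧ b = b') → w k b ≠ w k' b' :=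
    fun h heq => h (hwinj _ _ _ _ heq)
  have hwadj : ∀ k b k' b', k ≠ k' → G'.Adj (w k b) (w k' b') := by
    intro k b k' b' hkk
    exact hle (e.symm.map_adj_iff.mpr (fun h => hkk (σ.injective h)))
  have hbxy : (e x).2 ≠ (e y).2 := by
    intro h
    apply hxy
    rw [hx, hy, h]
  have haxy : G'.Adj (w 0 (e x).2) (w 0 (e y).2) := by
    rw [← hx, ← hy]
    exact Or.inr (by exact ⟨rfl, hxy⟩)
  have dd01 : Disjoint ({w 1 0, w 2 0} : Set V) {w 1 1} := Set.disjoint_singleton_right.mpr (by intro hm; simp only [Set.mem_insert_iff, Set.mem_singleton_iff] at hm; rcases hm with h | h; exacts [(hwne (fun hc => absurd hc.2 (by decide))) h, (hwne (fun hc => absurd hc.1 (by decide))) h])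
  have dd02 : Disjoint ({w 1 0, w 2 0} : Set V) {w 2 1} := Set.disjoint_singleton_right.mpr (by intro hm; simp only [Set.mem_insert_iff, Set.mem_singleton_iff] at hm; rcases hm with h | h; exacts [(hwne (fun hc => absurd hc.1 (by decide))) h, (hwne (fun hc => absurd hc.2 (by decide))) h])
  have dd03 : Disjoint ({w 1 0, w 2 0} : Set V) {w 0 (e x).2} := Set.disjoint_singleton_right.mpr (by intro hm; simp only [Set.mem_insert_iff, Set.mem_singleton_iff] at hm; rcases hm with h | h; exacts [(hwne (fun hc => absurd hc.1 (by decide))) h, (hwne (fun hc => absurd hc.1 (by decide))) h])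
  have dd04 : Disjoint ({w 1 0, w 2 0} : Set V) {w 0 (e y).2} := Set.disjoint_singleton_right.mpr (by intro hm; simp only [Set.mem_insert_iff, Set.mem_singleton_iff] at hm; rcases hm with h | h; exacts [(hwne (fun hc => absurd hc.1 (by decide))) h, (hwne (fun hc => absurd hc.1 (by decide))) h])
  have dd05 : Disjoint ({w 1 0, w 2 0} : Set V) {w 3 0} := Set.disjoint_singleton_right.mpr (by intro hm; simp only [Set.mem_insert_iff, Set.mem_singleton_iff] at hm; rcases hm with h | h; exacts [(hwne (fun hc => absurd hc.1 (by decide))) h, (hwne (fun hc => absurd hc.1 (by decide))) h])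
  have dd06 : Disjoint ({w 1 0, w 2 0} : Set V) {w 3 1} := Set.disjoint_singleton_right.mpr (by intro hm; simp only [Set.mem_insert_iff, Set.mem_singleton_iff] at hm; rcases hm with h | h; exacts [(hwne (fun hc => absurd hc.1 (by decide))) h, (hwne (fun hc => absurd hc.1 (by decide))) h])
  have dd07 : Disjoint ({w 1 0, w 2 0} : Set V) {w 4 0} := Set.disjoint_singleton_right.mpr (by intro hm; simp only [Set.mem_insert_iff, Set.mem_singleton_iff] at hm; rcases hm with h | h; exacts [(hwne (fun hc => absurd hc.1 (by decide))) h, (hwne (fun hc => absurd hc.1 (by decide))) h])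
  have dd08 : Disjoint ({w 1 0, w 2 0} : Set V) {w 4 1} := Set.disjoint_singleton_right.mpr (by intro hm; simp only [Set.mem_insert_iff, Set.mem_singleton_iff] at hm; rcases hm with h | h; exacts [(hwne (fun hc => absurd hc.1 (by decide))) h, (hwne (fun hc => absurd hc.1 (by decide))) h])
  have dd12 : Disjoint ({w 1 1} : Set V) {w 2 1} := Set.disjoint_singleton.mpr (hwne (fun hc => absurd hc.1 (by decide)))
  have dd13 : Disjoint ({w 1 1} : Set V) {w 0 (e x).2} := Set.disjoint_singleton.mpr (hwne (fun hc => absurd hc.1 (by decide)))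
  have dd14 : Disjoint ({w 1 1} : Set V) {w 0 (e y).2} := Set.disjoint_singleton.mpr (hwne (fun hc => absurd hc.1 (by decide)))
  have dd15 : Disjoint ({w 1 1} : Set V) {w 3 0} := Set.disjoint_singleton.mpr (hwne (fun hc => absurd hc.1 (by decide)))
  have dd16 : Disjoint ({w 1 1} : Set V) {w 3 1} := Set.disjoint_singleton.mpr (hwne (fun hc => absurd hc.1 (by decide)))
  have dd17 : Disjoint ({w 1 1} : Set V) {w 4 0} := Set.disjoint_singleton.mpr (hwne (fun hc => absurd hc.1 (by decide)))
  have dd18 : Disjoint ({w 1 1} : Set V) {w 4 1} := Set.disjoint_singleton.mpr (hwne (fun hc => absurd hc.1 (by decide)))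
  have dd23 : Disjoint ({w 2 1} : Set V) {w 0 (e x).2} := Set.disjoint_singleton.mpr (hwne (fun hc => absurd hc.1 (by decide)))
  have dd24 : Disjoint ({w 2 1} : Set V) {w 0 (e y).2} := Set.disjoint_singleton.mpr (hwne (fun hc => absurd hc.1 (by decide)))
  have dd25 : Disjoint ({w 2 1} : Set V) {w 3 0} := Set.disjoint_singleton.mpr (hwne (fun hc => absurd hc.1 (by decide)))
  have dd26 : Disjoint ({w 2 1} : Set V) {w 3 1} := Set.disjoint_singleton.mpr (hwne (fun hc => absurd hc.1 (by decide)))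
  have dd27 : Disjoint ({w 2 1} : Set V) {w 4 0} := Set.disjoint_singleton.mpr (hwne (fun hc => absurd hc.1 (by decide)))
  have dd28 : Disjoint ({w 2 1} : Set V) {w 4 1} := Set.disjoint_singleton.mpr (hwne (fun hc => absurd hc.1 (by decide)))
  have dd34 : Disjoint ({w 0 (e x).2} : Set V) {w 0 (e y).2} := Set.disjoint_singleton.mpr (hwne (fun hc => absurd hc.2 hbxy))
  have dd35 : Disjoint ({w 0 (e x).2} : Set V) {w 3 0} := Set.disjoint_singleton.mpr (hwne (fun hc => absurd hc.1 (by decide)))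
  have dd36 : Disjoint ({w 0 (e x).2} : Set V) {w 3 1} := Set.disjoint_singleton.mpr (hwne (fun hc => absurd hc.1 (by decide)))
  have dd37 : Disjoint ({w 0 (e x).2} : Set V) {w 4 0} := Set.disjoint_singleton.mpr (hwne (fun hc => absurd hc.1 (by decide)))
  have dd38 : Disjoint ({w 0 (e x).2} : Set V) {w 4 1} := Set.disjoint_singleton.mpr (hwne (fun hc => absurd hc.1 (by decide)))
  have dd45 : Disjoint ({w 0 (e y).2} : Set V) {w 3 0} := Set.disjoint_singleton.mpr (hwne (fun hc => absurd hc.1 (by decide)))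
  have dd46 : Disjoint ({w 0 (e y).2} : Set V) {w 3 1} := Set.disjoint_singleton.mpr (hwne (fun hc => absurd hc.1 (by decide)))
  have dd47 : Disjoint ({w 0 (e y).2} : Set V) {w 4 0} := Set.disjoint_singleton.mpr (hwne (fun hc => absurd hc.1 (by decide)))
  have dd48 : Disjoint ({w 0 (e y).2} : Set V) {w 4 1} := Set.disjoint_singleton.mpr (hwne (fun hc => absurd hc.1 (by decide)))
  have dd56 : Disjoint ({w 3 0} : Set V) {w 3 1} := Set.disjoint_singleton.mpr (hwne (fun hc => absurd hc.2 (by decide)))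
  have dd57 : Disjoint ({w 3 0} : Set V) {w 4 0} := Set.disjoint_singleton.mpr (hwne (fun hc => absurd hc.1 (by decide)))
  have dd58 : Disjoint ({w 3 0} : Set V) {w 4 1} := Set.disjoint_singleton.mpr (hwne (fun hc => absurd hc.1 (by decide)))
  have dd67 : Disjoint ({w 3 1} : Set V) {w 4 0} := Set.disjoint_singleton.mpr (hwne (fun hc => absurd hc.1 (by decide)))
  have dd68 : Disjoint ({w 3 1} : Set V) {w 4 1} := Set.disjoint_singleton.mpr (hwne (fun hc => absurd hc.1 (by decide)))
  have dd78 : Disjoint ({w 4 0} : Set V) {w 4 1} := Set.disjoint_singleton.mpr (hwne (fun hc => absurd hc.2 (by decide)))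
  have aa01 : SetAdj G' ({w 1 0, w 2 0} : Set V) {w 1 1} := ⟨w 2 0, Or.inr rfl, w 1 1, rfl, hwadj 2 0 1 1 (by decide)⟩
  have aa02 : SetAdj G' ({w 1 0, w 2 0} : Set V) {w 2 1} := ⟨w 1 0, Or.inl rfl, w 2 1, rfl, hwadj 1 0 2 1 (by decide)⟩
  have aa03 : SetAdj G' ({w 1 0, w 2 0} : Set V) {w 0 (e x).2} := ⟨w 1 0, Or.inl rfl, w 0 (e x).2, rfl, hwadj 1 0 0 (e x).2 (by decide)⟩
  have aa04 : SetAdj G' ({w 1 0, w 2 0} : Set V) {w 0 (e y).2} := ⟨w 1 0, Or.inl rfl, w 0 (e y).2, rfl, hwadj 1 0 0 (e y).2 (by decide)⟩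
  have aa05 : SetAdj G' ({w 1 0, w 2 0} : Set V) {w 3 0} := ⟨w 1 0, Or.inl rfl, w 3 0, rfl, hwadj 1 0 3 0 (by decide)⟩
  have aa06 : SetAdj G' ({w 1 0, w 2 0} : Set V) {w 3 1} := ⟨w 1 0, Or.inl rfl, w 3 1, rfl, hwadj 1 0 3 1 (by decide)⟩
  have aa07 : SetAdj G' ({w 1 0, w 2 0} : Set V) {w 4 0} := ⟨w 1 0, Or.inl rfl, w 4 0, rfl, hwadj 1 0 4 0 (by decide)⟩
  have aa08 : SetAdj G' ({w 1 0, w 2 0} : Set V) {w 4 1} := ⟨w 1 0, Or.inl rfl, w 4 1, rfl, hwadj 1 0 4 1 (by decide)⟩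
  have aa12 : SetAdj G' ({w 1 1} : Set V) {w 2 1} := ⟨w 1 1, rfl, w 2 1, rfl, hwadj 1 1 2 1 (by decide)⟩
  have aa13 : SetAdj G' ({w 1 1} : Set V) {w 0 (e x).2} := ⟨w 1 1, rfl, w 0 (e x).2, rfl, hwadj 1 1 0 (e x).2 (by decide)⟩
  have aa14 : SetAdj G' ({w 1 1} : Set V) {w 0 (e y).2} := ⟨w 1 1, rfl, w 0 (e y).2, rfl, hwadj 1 1 0 (e y).2 (by decide)⟩
  have aa15 : SetAdj G' ({w 1 1} : Set V) {w 3 0} := ⟨w 1 1, rfl, w 3 0, rfl, hwadj 1 1 3 0 (by decide)⟩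
  have aa16 : SetAdj G' ({w 1 1} : Set V) {w 3 1} := ⟨w 1 1, rfl, w 3 1, rfl, hwadj 1 1 3 1 (by decide)⟩
  have aa17 : SetAdj G' ({w 1 1} : Set V) {w 4 0} := ⟨w 1 1, rfl, w 4 0, rfl, hwadj 1 1 4 0 (by decide)⟩
  have aa18 : SetAdj G' ({w 1 1} : Set V) {w 4 1} := ⟨w 1 1, rfl, w 4 1, rfl, hwadj 1 1 4 1 (by decide)⟩
  have aa23 : SetAdj G' ({w 2 1} : Set V) {w 0 (e x).2} := ⟨w 2 1, rfl, w 0 (e x).2, rfl, hwadj 2 1 0 (e x).2 (by decide)⟩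
  have aa24 : SetAdj G' ({w 2 1} : Set V) {w 0 (e y).2} := ⟨w 2 1, rfl, w 0 (e y).2, rfl, hwadj 2 1 0 (e y).2 (by decide)⟩
  have aa25 : SetAdj G' ({w 2 1} : Set V) {w 3 0} := ⟨w 2 1, rfl, w 3 0, rfl, hwadj 2 1 3 0 (by decide)⟩
  have aa26 : SetAdj G' ({w 2 1} : Set V) {w 3 1} := ⟨w 2 1, rfl, w 3 1, rfl, hwadj 2 1 3 1 (by decide)⟩
  have aa27 : SetAdj G' ({w 2 1} : Set V) {w 4 0} := ⟨w 2 1, rfl, w 4 0, rfl, hwadj 2 1 4 0 (by decide)⟩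
  have aa28 : SetAdj G' ({w 2 1} : Set V) {w 4 1} := ⟨w 2 1, rfl, w 4 1, rfl, hwadj 2 1 4 1 (by decide)⟩
  have aa34 : SetAdj G' ({w 0 (e x).2} : Set V) {w 0 (e y).2} := ⟨w 0 (e x).2, rfl, w 0 (e y).2, rfl, haxy⟩
  have aa35 : SetAdj G' ({w 0 (e x).2} : Set V) {w 3 0} := ⟨w 0 (e x).2, rfl, w 3 0, rfl, hwadj 0 (e x).2 3 0 (by decide)⟩
  have aa36 : SetAdj G' ({w 0 (e x).2} : Set V) {w 3 1} := ⟨w 0 (e x).2, rfl, w 3 1, rfl, hwadj 0 (e x).2 3 1 (by decide)⟩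
  have aa37 : SetAdj G' ({w 0 (e x).2} : Set V) {w 4 0} := ⟨w 0 (e x).2, rfl, w 4 0, rfl, hwadj 0 (e x).2 4 0 (by decide)⟩
  have aa38 : SetAdj G' ({w 0 (e x).2} : Set V) {w 4 1} := ⟨w 0 (e x).2, rfl, w 4 1, rfl, hwadj 0 (e x).2 4 1 (by decide)⟩
  have aa45 : SetAdj G' ({w 0 (e y).2} : Set V) {w 3 0} := ⟨w 0 (e y).2, rfl, w 3 0, rfl, hwadj 0 (e y).2 3 0 (by decide)⟩
  have aa46 : SetAdj G' ({w 0 (e y).2} : Set V) {w 3 1} := ⟨w 0 (e y).2, rfl, w 3 1, rfl, hwadj 0 (e y).2 3 1 (by decide)⟩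
  have aa47 : SetAdj G' ({w 0 (e y).2} : Set V) {w 4 0} := ⟨w 0 (e y).2, rfl, w 4 0, rfl, hwadj 0 (e y).2 4 0 (by decide)⟩
  have aa48 : SetAdj G' ({w 0 (e y).2} : Set V) {w 4 1} := ⟨w 0 (e y).2, rfl, w 4 1, rfl, hwadj 0 (e y).2 4 1 (by decide)⟩
  have aa57 : SetAdj G' ({w 3 0} : Set V) {w 4 0} := ⟨w 3 0, rfl, w 4 0, rfl, hwadj 3 0 4 0 (by decide)⟩
  have aa58 : SetAdj G' ({w 3 0} : Set V) {w 4 1} := ⟨w 3 0, rfl, w 4 1, rfl, hwadj 3 0 4 1 (by decide)⟩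
  have aa67 : SetAdj G' ({w 3 1} : Set V) {w 4 0} := ⟨w 3 1, rfl, w 4 0, rfl, hwadj 3 1 4 0 (by decide)⟩
  have aa68 : SetAdj G' ({w 3 1} : Set V) {w 4 1} := ⟨w 3 1, rfl, w 4 1, rfl, hwadj 3 1 4 1 (by decide)⟩
  apply hasKEqMinor_of
    (![{w 1 0, w 2 0}, {w 1 1}, {w 2 1}, {w 0 (e x).2}, {w 0 (e y).2}, {w 3 0}, {w 3 1},
      {w 4 0}, {w 4 1}])
    s(5, 6) s(7, 8) (by decide) (by decide) (by decide)
  · intro i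
    fin_cases i
    exacts [⟨w 1 0, Or.inl rfl⟩, ⟨w 1 1, rfl⟩, ⟨w 2 1, rfl⟩, ⟨w 0 (e x).2, rfl⟩,
      ⟨w 0 (e y).2, rfl⟩, ⟨w 3 0, rfl⟩, ⟨w 3 1, rfl⟩, ⟨w 4 0, rfl⟩, ⟨w 4 1, rfl⟩]
  · intro i
    fin_cases i
    exacts [connSet_pair (hwadj 1 0 2 0 (by decide)), connSet_singleton _ _,
      connSet_singleton _ _, connSet_singleton _ _, connSet_singleton _ _,
      connSet_singleton _ _, connSet_singleton _ _, connSet_singleton _ _,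
      connSet_singleton _ _]
  · intro w1 w2 hlt
    fin_cases w1 <;> fin_cases w2 <;>
      first | exact absurd hlt (by decide) | assumption
  · intro w1 w2 hlt h1 h2
    fin_cases w1 <;> fin_cases w2 <;>
      first
        | exact absurd hlt (by decide)
        | exact absurd rfl h1
        | exact absurd rfl h2
        | assumption

end Base2
section Main
variable {V : Type}

lemma exists_enum5 {C : Set V} (h5 : C.ncard = 5) :
    ∃ g : Fin 5 → V, Function.Injective g ∧ Set.range g = C := by
  have hfin : C.Finite := finite_of_ncard5 h5
  haveI : Finite ↥C := hfin.to_subtype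
  have hcard : Nat.card ↥C = 5 := by rw [Nat.card_coe_set_eq]; exact h5
  let eqv : ↥C ≃ Fin 5 := Finite.equivFinOfCardEq hcard
  refine ⟨fun i => (eqv.symm i).1, ?_, ?_⟩
  · intro i j hij
    exact eqv.symm.injective (Subtype.ext hij)
  · ext v
    constructor
    · rintro ⟨i, rfl⟩
      exact (eqv.symm i).2
    · intro hv
      exact ⟨eqv ⟨v, hv⟩, by simp⟩

lemma main_cross {G : SimpleGraph V} {A B : Set V}
    (h5AB : (A ∩ B).ncard = 5) (hclqAB : G.IsClique (A ∩ B))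
    (hA : Cockade85 (G.induce A)) (hB : Cockade85 (G.induce B))
    {x y : V} (hx : x ∈ A \ B) (hy : y ∈ B \ A) (hxy : x ≠ y) :
    HasKEqMinor 9 (G ⊔ SimpleGraph.fromEdgeSet {s(x, y)}) := by
  set G' := G ⊔ SimpleGraph.fromEdgeSet {s(x, y)} with hG'
  have hle : G ≤ G' := le_sup_left
  have hxC : x ∉ A ∩ B := fun hc => hx.2 hc.2
  have hyC : y ∉ A ∩ B := fun hc => hy.2 hc.1
  have hadjxy : G'.Adj x y := Or.inr ⟨rfl, hxy⟩
  obtain ⟨L0, hL0⟩ := cockade_lightAt hB (Subtype.val ⁻¹' (A ∩ B))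
    ((ncard_preimage_val Set.inter_subset_right).trans h5AB)
    (clique_preimage_val hclqAB) ⟨y, hy.1⟩ (fun hc => hyC hc)
  have Lw0 := lightWit_lift Set.inter_subset_right hL0
  have Lw := Lw0.monoG hle
  have hTB : Subtype.val '' L0 ⊆ B := Subtype.coe_image_subset _ _
  have hTdisj : ∀ S : Set V, S ⊆ A → Disjoint (Subtype.val '' L0) S :=
    fun S hS => cross_disjoint hTB hS Lw0.disjC
  rcases cockade_strongOrHeavy hA (Subtype.val ⁻¹' (A ∩ B))
    ((ncard_preimage_val Set.inter_subset_left).trans h5AB)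
    (clique_preimage_val hclqAB) ⟨x, hx.1⟩ (fun hc => hxC hc) with hS | hH
  · obtain ⟨S1, S2, S3, hw0⟩ := hS
    have sw0 := strongWit_lift Set.inter_subset_left hw0
    have sw := sw0.monoG hle
    obtain ⟨g, hginj, hgr⟩ := exists_enum5 h5AB
    have hgadj : ∀ i j : Fin 5, i ≠ j → G'.Adj (g i) (g j) := by
      intro i j hij
      exact hle (hclqAB (hgr ▸ Set.mem_range_self i) (hgr ▸ Set.mem_range_self j)
        (hginj.ne hij))
    exact assemble_strong hginj hgr hgadj sw Lw
      (hTdisj _ (Subtype.coe_image_subset _ _)) (hTdisj _ (Subtype.coe_image_subset _ _))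
      (hTdisj _ (Subtype.coe_image_subset _ _))
      ⟨x, sw0.mem, y, Lw.mem, hadjxy⟩
  · obtain ⟨g, D, H, P1, P2, P3, hw0⟩ := hH
    have hwl := (heavyWit_lift Set.inter_subset_left hw0).monoG hle
    have hgadj : ∀ i j : Fin 5, i ≠ j → G'.Adj ((fun i => ((g i) : V)) i) ((fun i => ((g i) : V)) j) := by
      intro i j hij
      exact hle (hclqAB (hwl.grange ▸ Set.mem_range_self i)
        (hwl.grange ▸ Set.mem_range_self j) (hwl.ginj.ne hij))
    refine assemble_heavy hwl Lw (hTdisj _ (Subtype.coe_image_subset _ _))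
      (hTdisj _ (Subtype.coe_image_subset _ _)) (hTdisj _ (Subtype.coe_image_subset _ _))
      (hTdisj _ (Subtype.coe_image_subset _ _))
      (fun i => hTdisj _ (Subtype.coe_image_subset _ _)) hgadj hadjxy Lw.mem

lemma hasKEqMinor_side {G : SimpleGraph V} {A : Set V} {x y : V} (hxA : x ∈ A) (hyA : y ∈ A)
    (h : HasKEqMinor 9 ((G.induce A) ⊔
      SimpleGraph.fromEdgeSet {s((⟨x, hxA⟩ : ↥A), ⟨y, hyA⟩)})) :
    HasKEqMinor 9 (G ⊔ SimpleGraph.fromEdgeSet {s(x, y)}) := by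
  apply hasKEqMinor_induce (A := A)
  apply hasKEqMinor_mono ?_ h
  intro a b hab
  rcases hab with hab | hab
  · exact Or.inl hab
  · obtain ⟨hmem, hne⟩ := hab
    have hmem2 := Set.mem_singleton_iff.mp hmem
    rw [Sym2.eq_iff] at hmem2
    have hvne : (a : V) ≠ (b : V) := fun h => hne (Subtype.ext h)
    refine Or.inr ⟨Set.mem_singleton_iff.mpr (Sym2.eq_iff.mpr ?_), hvne⟩
    rcases hmem2 with ⟨h1, h2⟩ | ⟨h1, h2⟩
    · exact Or.inl ⟨congrArg Subtype.val h1, congrArg Subtype.val h2⟩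
    · exact Or.inr ⟨congrArg Subtype.val h1, congrArg Subtype.val h2⟩

end Main
theorem cockade_add_edge {V : Type} (G : SimpleGraph V) (h : Cockade85 G)
    (x y : V) (hxy : x ≠ y) (hna : ¬ G.Adj x y) :
    HasKEqMinor 9 (G ⊔ SimpleGraph.fromEdgeSet {s(x, y)}) := by
  induction h with
  | base₁ G hne =>
    exfalso
    have e := Classical.choice hne
    exact hna (e.map_adj_iff.mp (by
      simp only [SimpleGraph.top_adj, ne_eq]
      exact fun h => hxy (e.toEquiv.injective h)))
  | base₂ G hne =>
    exact hasKEqMinor_base2 (Classical.choice hne) hxy hna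
  | glue G A B hU hAB hBA h5AB hclqAB hsep hA hB ihA ihB =>
    by_cases hxA : x ∈ A
    · by_cases hyA : y ∈ A
      · exact hasKEqMinor_side hxA hyA
          (ihA ⟨x, hxA⟩ ⟨y, hyA⟩ (fun hc => hxy (congrArg Subtype.val hc)) hna)
      · have hyB : y ∈ B :=
          ((Set.mem_union _ _ _).mp (hU ▸ Set.mem_univ y)).resolve_left hyA
        by_cases hxB : x ∈ B
        · exact hasKEqMinor_side hxB hyB
            (ihB ⟨x, hxB⟩ ⟨y, hyB⟩ (fun hc => hxy (congrArg Subtype.val hc)) hna)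
        · exact main_cross h5AB hclqAB hA hB ⟨hxA, hxB⟩ ⟨hyB, hyA⟩ hxy
    · have hxB : x ∈ B :=
        ((Set.mem_union _ _ _).mp (hU ▸ Set.mem_univ x)).resolve_left hxA
      by_cases hyB : y ∈ B
      · exact hasKEqMinor_side hxB hyB
          (ihB ⟨x, hxB⟩ ⟨y, hyB⟩ (fun hc => hxy (congrArg Subtype.val hc)) hna)
      · have hyA : y ∈ A :=
          ((Set.mem_union _ _ _).mp (hU ▸ Set.mem_univ y)).resolve_right hyB
        have := main_cross h5AB hclqAB hA hB ⟨hyA, hyB⟩ ⟨hxB, hxA⟩ hxy.symm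
          (x := y) (y := x)
        rwa [show s(y, x) = s(x, y) from Sym2.eq_swap] at this
end

section
/- Let G be a graph with 7 ≤ |V(G)| ≤ 11 and minimum degree at least 6. If G is not 4-connected, then G contains K_5 as a subgraph. -/
open SimpleGraph

theorem not_four_connected_K5_aux {V : Type} [Fintype V] (G : SimpleGraph V)
    (h7 : 7 ≤ Fintype.card V) (h11 : Fintype.card V ≤ 11)
    (hdeg : ∀ v : V, 6 ≤ (G.neighborSet v).ncard)
    (hnc : ¬ (4 < Fintype.card V ∧ ∀ S : Set V, S.ncard < 4 → (G.induce Sᶜ).Connected)) :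
    ∃ s : Finset V, G.IsNClique 5 s := by
  classical
  push_neg at hnc
  obtain ⟨S, hSlt, hSdisc⟩ := hnc (by omega)
  have hS3 : S.ncard ≤ 3 := by omega
  have hcompl : Sᶜ.Nonempty := by
    rw [Set.nonempty_compl]
    intro h
    rw [h] at hS3
    simp [Set.ncard_univ, Nat.card_eq_fintype_card] at hS3
    omega
  have hne : Nonempty ↥Sᶜ := hcompl.to_subtype
  have hpre : ¬ (G.induce Sᶜ).Preconnected := fun h => hSdisc ⟨h⟩
  unfold SimpleGraph.Preconnected at hpre
  push_neg at hpre
  obtain ⟨a, b, hab⟩ := hpre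
  set Cmp : ↥Sᶜ → Set V :=
    fun a => {x | ∃ hx : x ∈ Sᶜ, (G.induce Sᶜ).Reachable a ⟨x, hx⟩} with hCmp
  have hmem : ∀ c : ↥Sᶜ, (c : V) ∈ Cmp c := fun c => ⟨c.2, Reachable.refl _⟩
  have hsub : ∀ c : ↥Sᶜ, Cmp c ⊆ Sᶜ := fun c x hx => hx.1
  have hnbr : ∀ c : ↥Sᶜ, ∀ v ∈ Cmp c, G.neighborSet v ⊆ (Cmp c \ {v}) ∪ S := by
    intro c v hv w hw
    by_cases hwS : w ∈ S
    · exact Or.inr hwS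
    · obtain ⟨hvS, hr⟩ := hv
      refine Or.inl ⟨⟨hwS, hr.trans (Adj.reachable (by exact hw))⟩, ?_⟩
      intro h
      rw [Set.mem_singleton_iff] at h
      exact G.irrefl (h ▸ hw)
  have hbound : ∀ c : ↥Sᶜ, 7 ≤ (Cmp c).ncard + S.ncard := by
    intro c
    have h1 := hdeg c
    have h2 : (G.neighborSet ↑c).ncard ≤ ((Cmp c \ {↑c}) ∪ S).ncard :=
      Set.ncard_le_ncard (hnbr c _ (hmem c)) (Set.toFinite _)
    have h3 : ((Cmp c \ {↑c}) ∪ S).ncard ≤ (Cmp c \ {↑c}).ncard + S.ncard :=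
      Set.ncard_union_le _ _
    have h4 : (Cmp c \ {(c : V)}).ncard = (Cmp c).ncard - 1 :=
      Set.ncard_diff_singleton_of_mem (hmem c)
    have h5 : 0 < (Cmp c).ncard := (Set.ncard_pos (Set.toFinite _)).mpr ⟨_, hmem c⟩
    omega
  have hdisj : Disjoint (Cmp a) (Cmp b) := by
    rw [Set.disjoint_left]
    rintro x ⟨hx, hra⟩ ⟨hx', hrb⟩
    exact hab (hra.trans hrb.symm)
  have hdS : ∀ c : ↥Sᶜ, Disjoint (Cmp c) S := by
    intro c
    rw [Set.disjoint_left]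
    intro x hx hxS
    exact hsub c hx hxS
  have hcard : (Cmp a).ncard + (Cmp b).ncard + S.ncard ≤ Fintype.card V := by
    have hd1 : Disjoint (Cmp a ∪ Cmp b) S := Set.disjoint_union_left.mpr ⟨hdS a, hdS b⟩
    have e1 : (Cmp a ∪ Cmp b ∪ S).ncard = (Cmp a ∪ Cmp b).ncard + S.ncard :=
      Set.ncard_union_eq hd1 (Set.toFinite _) (Set.toFinite _)
    have e2 : (Cmp a ∪ Cmp b).ncard = (Cmp a).ncard + (Cmp b).ncard :=
      Set.ncard_union_eq hdisj (Set.toFinite _) (Set.toFinite _)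
    have e3 : (Cmp a ∪ Cmp b ∪ S).ncard ≤ Fintype.card V := by
      have := Set.ncard_le_ncard (Set.subset_univ (Cmp a ∪ Cmp b ∪ S)) (Set.toFinite _)
      simpa [Set.ncard_univ, Nat.card_eq_fintype_card] using this
    omega
  have hba := hbound a
  have hbb := hbound b
  have hCa4 : (Cmp a).ncard = 4 := by omega
  have hSe3 : S.ncard = 3 := by omega
  obtain ⟨s, hs⟩ := (Set.ncard_pos (Set.toFinite S)).mp (by omega)
  have hnbreq : ∀ v ∈ Cmp a, G.neighborSet v = (Cmp a \ {v}) ∪ S := by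
    intro v hv
    refine (Set.eq_of_subset_of_ncard_le (hnbr a v hv) ?_ (Set.toFinite _))
    have u1 : ((Cmp a \ {v}) ∪ S).ncard ≤ (Cmp a \ {v}).ncard + S.ncard :=
      Set.ncard_union_le _ _
    have u2 : (Cmp a \ {v}).ncard = (Cmp a).ncard - 1 :=
      Set.ncard_diff_singleton_of_mem hv
    have := hdeg v
    omega
  have hadj : ∀ x ∈ insert s (Cmp a), ∀ y ∈ insert s (Cmp a), x ≠ y → G.Adj x y := by
    intro x hx y hy hxy
    rcases hx with rfl | hx
    · rcases hy with rfl | hy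
      · exact absurd rfl hxy
      · have : x ∈ G.neighborSet y := by rw [hnbreq y hy]; exact Or.inr hs
        exact this.symm
    · rcases hy with rfl | hy
      · have : y ∈ G.neighborSet x := by rw [hnbreq x hx]; exact Or.inr hs
        exact this
      · have : y ∈ G.neighborSet x := by
          rw [hnbreq x hx]
          exact Or.inl ⟨hy, fun h => hxy h.symm⟩
        exact this
  have hfin : (insert s (Cmp a)).Finite := Set.toFinite _
  refine ⟨hfin.toFinset, ?_, ?_⟩
  · intro x hx y hy hxy
    simp only [Finset.mem_coe, Set.Finite.mem_toFinset] at hx hy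
    exact hadj x hx y hy hxy
  · have hsnot : s ∉ Cmp a := fun h => hsub a h hs
    rw [← Set.ncard_eq_toFinset_card _ hfin,
      Set.ncard_insert_of_notMem hsnot (Set.toFinite _)]
    omega

theorem not_four_connected_K5 {V : Type} [Fintype V] (G : SimpleGraph V)
    (h7 : 7 ≤ Fintype.card V) (h11 : Fintype.card V ≤ 11)
    (hdeg : ∀ v : V, 6 ≤ (G.neighborSet v).ncard)
    (hnc : ¬ IsKConnected 4 G) :
    ∃ s : Finset V, G.IsNClique 5 s := by
  refine not_four_connected_K5_aux G h7 h11 hdeg ?_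
  rwa [IsKConnected] at hnc
end

section
/- Let G be a graph with 8 ≤ |V(G)| ≤ 11 and minimum degree at least 6, and let v_1, ..., v_6 be six distinct vertices of G with v_1 and v_2 nonadjacent. Then there exists a connected component C of G - {v_1,...,v_6} such that either both v_1 and v_2 have a neighbor in C, or each of v_3, v_4, v_5, v_6 has a neighbor in C. -/
open SimpleGraph

lemma aux_nbr {V : Type} [Fintype V] (G : SimpleGraph V)
    (hdeg : ∀ w : V, 6 ≤ (G.neighborSet w).ncard)
    (S : Set V) (hS : S.ncard = 6) (b : V) (hb : b ∈ S)
    (c : (G.induce Sᶜ).ConnectedComponent) (hc : c.supp.ncard ≤ 2)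
    (w : ↥Sᶜ) (hw : (G.induce Sᶜ).connectedComponentMk w = c)
    (hnb : ∀ u : ↥Sᶜ, (G.induce Sᶜ).connectedComponentMk u = c → ¬ G.Adj b ↑u) :
    ∀ x ∈ S, x ≠ b → G.Adj x ↑w := by
  classical
  have h1 : G.neighborSet ↑w \ S ⊆ Subtype.val '' (c.supp \ {w}) := by
    rintro x ⟨hxn, hxS⟩
    refine ⟨⟨x, hxS⟩, ⟨?_, ?_⟩, rfl⟩
    · rw [ConnectedComponent.mem_supp_iff, ← hw]
      have hadj : (G.induce Sᶜ).Adj w ⟨x, hxS⟩ := by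
        simpa using hxn
      exact ConnectedComponent.sound hadj.reachable.symm
    · intro hmem
      simp only [Set.mem_singleton_iff] at hmem
      apply G.irrefl (v := ↑w)
      have : (x : V) = ↑w := congrArg Subtype.val hmem
      exact this ▸ hxn
  have hwsupp : ({w} : Set ↥Sᶜ) ⊆ c.supp := by
    simp [Set.singleton_subset_iff, ConnectedComponent.mem_supp_iff, hw]
  have h2 : (G.neighborSet ↑w \ S).ncard ≤ 1 := by
    have e1 : (G.neighborSet ↑w \ S).ncard ≤ (Subtype.val '' (c.supp \ {w})).ncard :=
      Set.ncard_le_ncard h1 (Set.toFinite _)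
    have e2 : (Subtype.val '' (c.supp \ {w})).ncard = (c.supp \ {w}).ncard :=
      Set.ncard_image_of_injective _ Subtype.val_injective
    have e3 : (c.supp \ {w}).ncard = c.supp.ncard - 1 := by
      rw [Set.ncard_diff hwsupp, Set.ncard_singleton]
    have e4 : 1 ≤ c.supp.ncard := by
      have := Set.ncard_le_ncard hwsupp (Set.toFinite _)
      simpa using this
    omega
  have h3 : 5 ≤ (G.neighborSet ↑w ∩ S).ncard := by
    have e := Set.ncard_inter_add_ncard_diff_eq_ncard (G.neighborSet ↑w) S
    have := hdeg ↑w
    omega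
  have h4 : G.neighborSet ↑w ∩ S ⊆ S \ {b} := by
    rintro x ⟨hxn, hxS⟩
    refine ⟨hxS, ?_⟩
    intro hxb
    simp only [Set.mem_singleton_iff] at hxb
    exact hnb w hw (hxb ▸ hxn.symm)
  have h5 : (S \ {b}).ncard = 5 := by
    rw [Set.ncard_diff (Set.singleton_subset_iff.mpr hb), Set.ncard_singleton, hS]
  have h6 : G.neighborSet ↑w ∩ S = S \ {b} :=
    Set.eq_of_subset_of_ncard_le h4 (by omega)
  intro x hx hxb
  have : x ∈ G.neighborSet ↑w ∩ S := h6 ▸ ⟨hx, by simpa using hxb⟩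
  exact this.1.symm


theorem edge_or_K14_component {V : Type} [Fintype V] (G : SimpleGraph V)
    (h8 : 8 ≤ Fintype.card V) (h11 : Fintype.card V ≤ 11)
    (hdeg : ∀ w : V, 6 ≤ (G.neighborSet w).ncard)
    (v : Fin 6 → V) (hv : Function.Injective v)
    (hna : ¬ G.Adj (v 0) (v 1)) :
    ∃ c : (G.induce (Set.range v)ᶜ).ConnectedComponent,
      ((∃ u, (G.induce (Set.range v)ᶜ).connectedComponentMk u = c ∧ G.Adj (v 0) ↑u) ∧
       (∃ u, (G.induce (Set.range v)ᶜ).connectedComponentMk u = c ∧ G.Adj (v 1) ↑u)) ∨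
      (∀ i : Fin 6, 2 ≤ (i : ℕ) →
        ∃ u, (G.induce (Set.range v)ᶜ).connectedComponentMk u = c ∧ G.Adj (v i) ↑u) := by
  classical
  set S : Set V := Set.range v with hSdef
  have hS : S.ncard = 6 := by
    rw [hSdef, ← Set.image_univ, Set.ncard_image_of_injective _ hv, Set.ncard_univ]
    simp
  have hv01 : v 0 ≠ v 1 := fun h => by simpa using hv h
  -- existence of an outside neighbor
  have outn : ∀ a b : Fin 6, v a ≠ v b → ¬ G.Adj (v a) (v b) →
      ∃ x, x ∈ G.neighborSet (v a) \ S := by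
    intro a b hab hnadj
    have hsub : G.neighborSet (v a) ∩ S ⊆ S \ {v a, v b} := by
      rintro x ⟨hxn, hxS⟩
      refine ⟨hxS, ?_⟩
      rintro (rfl | rfl)
      · exact G.irrefl hxn
      · exact hnadj hxn
    have hpair : ({v a, v b} : Set V).ncard = 2 := Set.ncard_pair hab
    have hpairsub : ({v a, v b} : Set V) ⊆ S := by
      rintro x (rfl | rfl) <;> exact Set.mem_range_self _
    have h4 : (S \ {v a, v b}).ncard = 4 := by
      rw [Set.ncard_diff hpairsub, hpair, hS]
    have hle : (G.neighborSet (v a) ∩ S).ncard ≤ (S \ {v a, v b}).ncard :=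
      Set.ncard_le_ncard hsub (Set.toFinite _)
    have e := Set.ncard_inter_add_ncard_diff_eq_ncard (G.neighborSet (v a)) S
    have := hdeg (v a)
    have hpos : 0 < (G.neighborSet (v a) \ S).ncard := by omega
    obtain ⟨x, hx⟩ := Set.nonempty_of_ncard_ne_zero (s := G.neighborSet (v a) \ S) (by omega)
    exact ⟨x, hx⟩
  obtain ⟨x0, hx0⟩ := outn 0 1 hv01 hna
  obtain ⟨x1, hx1⟩ := outn 1 0 hv01.symm (fun h => hna h.symm)
  let u0 : ↥Sᶜ := ⟨x0, hx0.2⟩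
  let u1 : ↥Sᶜ := ⟨x1, hx1.2⟩
  set G' := G.induce Sᶜ with hG'
  set c0 := G'.connectedComponentMk u0 with hc0
  set c1 := G'.connectedComponentMk u1 with hc1
  by_cases hcc : c0 = c1
  · exact ⟨c0, Or.inl ⟨⟨u0, rfl, hx0.1⟩, ⟨u1, hcc.symm, hx1.1⟩⟩⟩
  · -- disjoint supports, small total
    have hdisj : Disjoint c0.supp c1.supp := by
      rw [Set.disjoint_left]
      intro z hz0 hz1
      rw [ConnectedComponent.mem_supp_iff] at hz0 hz1
      exact hcc (hz0 ▸ hz1 ▸ rfl)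
    have hcompl : (Sᶜ : Set V).ncard ≤ 5 := by
      have := Set.ncard_add_ncard_compl S
      have hcV : Nat.card V = Fintype.card V := Nat.card_eq_fintype_card
      omega
    have hsum : c0.supp.ncard + c1.supp.ncard ≤ 5 := by
      have e1 : (c0.supp ∪ c1.supp).ncard = c0.supp.ncard + c1.supp.ncard :=
        Set.ncard_union_eq hdisj
      have e2 : (c0.supp ∪ c1.supp).ncard ≤ (Set.univ : Set ↥Sᶜ).ncard :=
        Set.ncard_le_ncard (Set.subset_univ _) (Set.toFinite _)
      have e3 : (Set.univ : Set ↥Sᶜ).ncard = Nat.card ↥Sᶜ := Set.ncard_univ _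
      have e4 : Nat.card ↥Sᶜ = (Sᶜ : Set V).ncard := Nat.card_coe_set_eq _
      omega
    have hvne1 : ∀ i : Fin 6, 2 ≤ (i : ℕ) → v i ≠ v 1 := by
      intro i hi h
      have h1 := hv h
      rw [h1] at hi
      simp at hi
    have hvne0 : ∀ i : Fin 6, 2 ≤ (i : ℕ) → v i ≠ v 0 := by
      intro i hi h
      have h1 := hv h
      rw [h1] at hi
      simp at hi
    rcases (by omega : c0.supp.ncard ≤ 2 ∨ c1.supp.ncard ≤ 2) with hsmall | hsmall
    · by_cases hnb : ∃ u : ↥Sᶜ, G'.connectedComponentMk u = c0 ∧ G.Adj (v 1) ↑u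
      · exact ⟨c0, Or.inl ⟨⟨u0, rfl, hx0.1⟩, hnb⟩⟩
      · push_neg at hnb
        have key := aux_nbr G hdeg S hS (v 1) (Set.mem_range_self _) c0 hsmall u0 rfl
          (fun u hu => hnb u hu)
        refine ⟨c0, Or.inr fun i hi => ⟨u0, rfl, ?_⟩⟩
        exact key (v i) (Set.mem_range_self _) (hvne1 i hi)
    · by_cases hnb : ∃ u : ↥Sᶜ, G'.connectedComponentMk u = c1 ∧ G.Adj (v 0) ↑u
      · exact ⟨c1, Or.inl ⟨hnb, ⟨u1, rfl, hx1.1⟩⟩⟩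
      · push_neg at hnb
        have key := aux_nbr G hdeg S hS (v 0) (Set.mem_range_self _) c1 hsmall u1 rfl
          (fun u hu => hnb u hu)
        refine ⟨c1, Or.inr fun i hi => ⟨u1, rfl, ?_⟩⟩
        exact key (v i) (Set.mem_range_self _) (hvne0 i hi)
end
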